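/- arXiv:1411.3271 — 8 statements merged into one kernel-verified Lean document; each statement's English description precedes it below -/
import Mathlib

section
/- For α > 2 and any constant c > 0, B'(2/α, 1 - 2/α, 1/(1+cβ)) = (cβ)^{1-2/α}/(1 - 2/α) + o(β^{1-2/α}) as β → 0⁺. -/
open MeasureTheory Real Filter Asymptotics

/-- Complementary incomplete Beta function B'(a,b,z) = ∫_z^1 u^{a-1}(1-u)^{b-1} du. -/
noncomputable def Bcomp (a b z : ℝ) : ℝ := ∫ u in z..(1:ℝ), u ^ (a - 1) * (1 - u) ^ (b - 1)

lemma int_one_sub (b z : ℝ) (hb : 0 < b) :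
    ∫ u in z..(1:ℝ), (1 - u) ^ (b - 1) = (1 - z) ^ b / b := by
  have h := intervalIntegral.integral_comp_sub_left (a := z) (b := 1)
    (fun t : ℝ => t ^ (b - 1)) 1
  simp only [sub_self] at h
  rw [h, integral_rpow (Or.inl (by linarith))]
  have : b - 1 + 1 = b := by ring
  rw [this, Real.zero_rpow hb.ne']
  ring

lemma integrable_aux (a b z : ℝ) (hb : 0 < b) (hz : 0 < z) (hz1 : z ≤ 1) :
    IntervalIntegrable (fun u : ℝ => u ^ (a - 1) * (1 - u) ^ (b - 1)) volume z 1 := by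
  have h1 : IntervalIntegrable (fun u : ℝ => (1 - u) ^ (b - 1)) volume z 1 := by
    have := (intervalIntegral.intervalIntegrable_rpow' (a := 1 - z) (b := 0) (r := b - 1)
      (by linarith)).comp_sub_left 1
    simpa using this
  apply h1.continuousOn_mul
  apply ContinuousOn.rpow_const continuousOn_id
  intro x hx
  left
  rw [Set.uIcc_of_le hz1] at hx
  exact ne_of_gt (lt_of_lt_of_le hz hx.1)

lemma bounds_aux (a b z : ℝ) (ha : a ≤ 1) (hb : 0 < b) (hz : 0 < z) (hz1 : z ≤ 1) :
    (1 - z) ^ b / b ≤ Bcomp a b z ∧ Bcomp a b z ≤ z ^ (a - 1) * ((1 - z) ^ b / b) := by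
  have hint := integrable_aux a b z hb hz hz1
  have h1 : IntervalIntegrable (fun u : ℝ => (1 - u) ^ (b - 1)) volume z 1 := by
    have := (intervalIntegral.intervalIntegrable_rpow' (a := 1 - z) (b := 0) (r := b - 1)
      (by linarith)).comp_sub_left 1
    simpa using this
  constructor
  · rw [← int_one_sub b z hb]
    apply intervalIntegral.integral_mono_on hz1 h1 hint
    intro u hu
    obtain ⟨hu1, hu2⟩ := hu
    have hu0 : 0 < u := lt_of_lt_of_le hz hu1
    have h2 : (1:ℝ) ≤ u ^ (a - 1) :=
      Real.one_le_rpow_of_pos_of_le_one_of_nonpos hu0 hu2 (by linarith)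
    nlinarith [Real.rpow_nonneg (by linarith : (0:ℝ) ≤ 1 - u) (b - 1)]
  · have : z ^ (a - 1) * ((1 - z) ^ b / b)
        = ∫ u in z..(1:ℝ), z ^ (a - 1) * (1 - u) ^ (b - 1) := by
      rw [intervalIntegral.integral_const_mul, int_one_sub b z hb]
    rw [this]
    apply intervalIntegral.integral_mono_on hz1 hint (h1.const_mul _)
    intro u hu
    obtain ⟨hu1, hu2⟩ := hu
    have hu0 : 0 < u := lt_of_lt_of_le hz hu1
    have h2 : u ^ (a - 1) ≤ z ^ (a - 1) :=
      Real.rpow_le_rpow_of_nonpos hz hu1 (by linarith)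
    nlinarith [Real.rpow_nonneg (by linarith : (0:ℝ) ≤ 1 - u) (b - 1)]

/-- For α > 2, c > 0: B'(2/α, 1-2/α, 1/(1+cβ)) = (cβ)^{1-2/α}/(1-2/α) + o(β^{1-2/α}) as β → 0⁺. -/
theorem stmt1 (α c : ℝ) (hα : 2 < α) (hc : 0 < c) :
    (fun β : ℝ => Bcomp (2 / α) (1 - 2 / α) (1 / (1 + c * β))
        - (c * β) ^ (1 - 2 / α) / (1 - 2 / α))
      =o[nhdsWithin 0 (Set.Ioi 0)] fun β : ℝ => β ^ (1 - 2 / α) := by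
  have hα0 : (0:ℝ) < α := by linarith
  set a : ℝ := 2 / α with ha_def
  set b : ℝ := 1 - 2 / α with hb_def
  have ha0 : 0 < a := by positivity
  have ha1 : a < 1 := by rw [ha_def, div_lt_one hα0]; linarith
  have hb0 : 0 < b := by simp only [hb_def]; linarith
  -- the key pointwise bound for β > 0
  have key : ∀ β : ℝ, 0 < β →
      |Bcomp a b (1 / (1 + c * β)) - (c * β) ^ b / b|
        ≤ (c ^ b * (1 - (1 / (1 + c * β)) ^ b) / b) * β ^ b := by
    intro β hβ
    set z : ℝ := 1 / (1 + c * β) with hz_def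
    have hd : (0:ℝ) < 1 + c * β := by nlinarith
    have hz0 : 0 < z := by positivity
    have hz1 : z < 1 := by
      rw [hz_def, div_lt_one hd]; nlinarith
    have h1z : 1 - z = c * β * z := by
      rw [hz_def]; field_simp; ring
    obtain ⟨hlo, hhi⟩ := bounds_aux a b z ha1.le hb0 hz0 hz1.le
    have hcb : (0:ℝ) ≤ c * β := by positivity
    have hmul : (1 - z) ^ b = (c * β) ^ b * z ^ b := by
      rw [h1z, Real.mul_rpow hcb hz0.le]
    have hza : z ^ (a - 1) * z ^ b = 1 := by
      rw [← Real.rpow_add hz0]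
      have : a - 1 + b = 0 := by rw [ha_def, hb_def]; ring
      rw [this, Real.rpow_zero]
    -- upper bound: Bcomp ≤ (cβ)^b / b
    have hub : Bcomp a b z ≤ (c * β) ^ b / b := by
      calc Bcomp a b z ≤ z ^ (a - 1) * ((1 - z) ^ b / b) := hhi
        _ = (z ^ (a - 1) * z ^ b) * ((c * β) ^ b / b) := by rw [hmul]; ring
        _ = (c * β) ^ b / b := by rw [hza, one_mul]
    have hlb : (c * β) ^ b * z ^ b / b ≤ Bcomp a b z := by
      calc (c * β) ^ b * z ^ b / b = (1 - z) ^ b / b := by rw [hmul]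
        _ ≤ Bcomp a b z := hlo
    have hcbb : (c * β) ^ b = c ^ b * β ^ b := Real.mul_rpow hc.le hβ.le
    rw [abs_le]
    constructor
    · have : (c ^ b * (1 - z ^ b) / b) * β ^ b
          = (c * β) ^ b / b - (c * β) ^ b * z ^ b / b := by
        rw [hcbb]; ring
      nlinarith [hlb]
    · have hzb1 : z ^ b ≤ 1 := Real.rpow_le_one hz0.le hz1.le hb0.le
      have h1 : 0 ≤ (c ^ b * (1 - z ^ b) / b) * β ^ b := by
        have e1 : (0:ℝ) ≤ β ^ b := Real.rpow_nonneg hβ.le b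
        have e2 : (0:ℝ) ≤ c ^ b := Real.rpow_nonneg hc.le b
        have e3 : (0:ℝ) ≤ 1 - z ^ b := by linarith
        exact mul_nonneg (div_nonneg (mul_nonneg e2 e3) hb0.le) e1
      nlinarith [hub]
  rw [isLittleO_iff]
  intro ε hε
  -- the coefficient tends to 0
  have htend : Tendsto (fun β : ℝ => c ^ b * (1 - (1 / (1 + c * β)) ^ b) / b)
      (nhdsWithin 0 (Set.Ioi 0)) (nhds 0) := by
    have hcont : ContinuousAt (fun β : ℝ => c ^ b * (1 - (1 / (1 + c * β)) ^ b) / b) 0 := by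
      have h1 : ContinuousAt (fun β : ℝ => 1 + c * β) 0 := by fun_prop
      have h2 : (fun β : ℝ => 1 + c * β) 0 ≠ 0 := by norm_num
      have h3 : ContinuousAt (fun β : ℝ => (1 / (1 + c * β)) ^ b) 0 := by
        apply ContinuousAt.rpow_const
        · exact (continuousAt_const.div h1 h2)
        · left; norm_num
      exact (continuousAt_const.mul (continuousAt_const.sub h3)).div_const b
    have h00 : c ^ b * (1 - (1 / (1 + c * 0)) ^ b) / b = 0 := by norm_num
    have htt := hcont.tendsto.mono_left (nhdsWithin_le_nhds (s := Set.Ioi (0:ℝ)))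
    rwa [h00] at htt
  have hev : ∀ᶠ β in nhdsWithin (0:ℝ) (Set.Ioi 0),
      c ^ b * (1 - (1 / (1 + c * β)) ^ b) / b ≤ ε := by
    filter_upwards [htend (Metric.ball_mem_nhds 0 hε)] with β hβ
    simp only [Set.mem_preimage, Metric.mem_ball, Real.dist_eq, sub_zero] at hβ
    exact (abs_le.mp hβ.le).2
  filter_upwards [hev, self_mem_nhdsWithin] with β hβ1 (hβ2 : 0 < β)
  calc ‖Bcomp a b (1 / (1 + c * β)) - (c * β) ^ b / b‖
      ≤ (c ^ b * (1 - (1 / (1 + c * β)) ^ b) / b) * β ^ b := key β hβ2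
    _ ≤ ε * β ^ b := by
        have : (0:ℝ) ≤ β ^ b := Real.rpow_nonneg hβ2.le b
        nlinarith
    _ = ε * ‖β ^ b‖ := by rw [Real.norm_eq_abs, abs_of_nonneg (Real.rpow_nonneg hβ2.le b)]
end

section
/- Let G ~ Gamma(M,1) be independent of two independent nonnegative random variables I₁, I₂ with Laplace transforms L₁, L₂ each M-1 times differentiable. Then Pr(G > β(c₁I₁ + c₂I₂)) = Σ_{n=0}^{M-1} ((-β)^n/n!) Σ_{n₁=0}^{n} C(n,n₁) c₁^{n₁} c₂^{n-n₁} L₁^{(n₁)}(βc₁) L₂^{(n-n₁)}(βc₂), for any constants c₁, c₂ > 0. -/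
open MeasureTheory Real Filter Topology ProbabilityTheory


lemma exp_term_hasDeriv (n : ℕ) (x : ℝ) :
    HasDerivAt (fun u : ℝ => u ^ n * Real.exp (-u) / n.factorial)
      (((n : ℝ) * x ^ (n - 1) * Real.exp (-x) + x ^ n * (-Real.exp (-x))) / n.factorial) x := by
  have h1 : HasDerivAt (fun u : ℝ => u ^ n) ((n : ℝ) * x ^ (n - 1)) x := hasDerivAt_pow n x
  have h2 : HasDerivAt (fun u : ℝ => Real.exp (-u)) (-Real.exp (-x)) x := by
    exact ((hasDerivAt_neg x).exp).congr_deriv (by ring)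
  exact (h1.mul h2).div_const _

lemma gamma_tail (K : ℕ) (t : ℝ) (ht : 0 ≤ t) :
    ∫ x in Set.Ioi t, x ^ K * Real.exp (-x) / (K.factorial : ℝ)
      = ∑ n ∈ Finset.range (K + 1), t ^ n * Real.exp (-t) / (n.factorial : ℝ) := by
  set F : ℝ → ℝ := fun u => -∑ n ∈ Finset.range (K + 1), u ^ n * Real.exp (-u) / n.factorial
    with hF
  have key : ∀ x : ℝ,
      (∑ n ∈ Finset.range (K + 1),
        ((n : ℝ) * x ^ (n - 1) * Real.exp (-x) + x ^ n * (-Real.exp (-x))) / n.factorial)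
      = -(x ^ K * Real.exp (-x) / K.factorial) := by
    intro x
    rw [Finset.sum_range_succ']
    have h2 : ∀ i : ℕ,
        (((i+1 : ℕ) : ℝ) * x ^ (i + 1 - 1) * Real.exp (-x) + x ^ (i+1) * (-Real.exp (-x)))
          / (i+1).factorial
        = x ^ i * Real.exp (-x) / i.factorial
          - x ^ (i+1) * Real.exp (-x) / (i+1).factorial := by
      intro i
      have hfs : ((i+1).factorial : ℝ) = (i+1 : ℝ) * i.factorial := by
        push_cast [Nat.factorial_succ]; ring
      have hi : (i.factorial : ℝ) ≠ 0 := Nat.cast_ne_zero.mpr i.factorial_ne_zero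
      have hi1 : ((i+1 : ℕ) : ℝ) ≠ 0 := by positivity
      have hi2 : (i : ℝ) + 1 ≠ 0 := by positivity
      rw [Nat.add_sub_cancel, hfs]
      push_cast
      field_simp
      ring
    rw [Finset.sum_congr rfl fun i _ => h2 i, Finset.sum_range_sub'
      (f := fun n => x ^ n * Real.exp (-x) / n.factorial)]
    ring
  have hderiv : ∀ x ∈ Set.Ici t, HasDerivAt F (x ^ K * Real.exp (-x) / K.factorial) x := by
    intro x _
    have := (HasDerivAt.sum (u := Finset.range (K + 1))
      (fun n _ => exp_term_hasDeriv n x)).neg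
    rw [key x, neg_neg] at this
    exact this.congr_of_eventuallyEq (Filter.Eventually.of_forall fun u => by simp [hF, Finset.sum_apply])
  have hint : IntegrableOn (fun x : ℝ => x ^ K * Real.exp (-x) / K.factorial) (Set.Ioi t) := by
    have h0 : IntegrableOn (fun x : ℝ => x ^ (K : ℝ) * Real.exp (-x ^ (1:ℝ))) (Set.Ioi 0) :=
      integrableOn_rpow_mul_exp_neg_rpow (lt_of_lt_of_le neg_one_lt_zero (Nat.cast_nonneg K)) one_pos
    have h1 : IntegrableOn (fun x : ℝ => x ^ K * Real.exp (-x)) (Set.Ioi 0) := by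
      refine h0.congr_fun (fun x hx => ?_) measurableSet_Ioi
      simp only [Real.rpow_natCast, Real.rpow_one]
    exact ((h1.mono_set (Set.Ioi_subset_Ioi ht)).div_const _)
  have htend : Tendsto F atTop (𝓝 0) := by
    have : Tendsto (fun u : ℝ => ∑ n ∈ Finset.range (K + 1),
        u ^ n * Real.exp (-u) / n.factorial) atTop (𝓝 0) := by
      have := tendsto_finset_sum (Finset.range (K + 1))
        (fun n _ => (Real.tendsto_pow_mul_exp_neg_atTop_nhds_zero n).div_const
          (n.factorial : ℝ))
      simpa using this
    simpa [hF] using this.neg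
  have := integral_Ioi_of_hasDerivAt_of_tendsto' hderiv hint htend
  rw [this]
  simp [hF]


lemma laplace_iteratedDeriv {Ω : Type*} [MeasurableSpace Ω] (μ : Measure Ω)
    [IsProbabilityMeasure μ]
    (I : Ω → ℝ) (hIm : Measurable I) (hInn : ∀ ω, 0 ≤ I ω)
    (L : ℝ → ℝ) (K : ℕ) (hLd : ContDiff ℝ (K : ℕ) L) (s₀ : ℝ) (hs₀ : 0 < s₀)
    (hL : ∀ s : ℝ, 0 < s → L s = ∫ ω, Real.exp (-s * I ω) ∂μ)
    (hmom : ∀ n ≤ K, Integrable (fun ω => I ω ^ n * Real.exp (-s₀ * I ω)) μ)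
    (n : ℕ) (hn : n ≤ K) :
    iteratedDeriv n L s₀ = (-1) ^ n * ∫ ω, I ω ^ n * Real.exp (-s₀ * I ω) ∂μ := by
  set A : ℕ → ℝ → ℝ := fun m s => ∫ ω, I ω ^ m * Real.exp (-s * I ω) ∂μ with hA
  have hmeas : ∀ (m : ℕ) (s : ℝ),
      AEStronglyMeasurable (fun ω => I ω ^ m * Real.exp (-s * I ω)) μ := by
    intro m s
    exact ((hIm.pow_const m).mul ((hIm.const_mul (-s)).exp)).aestronglyMeasurable
  have hbnd : ∀ (m : ℕ) (s : ℝ), s₀ ≤ s → ∀ ω,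
      ‖I ω ^ m * Real.exp (-s * I ω)‖ ≤ I ω ^ m * Real.exp (-s₀ * I ω) := by
    intro m s hs ω
    have h1 : (0:ℝ) ≤ I ω ^ m := pow_nonneg (hInn ω) m
    rw [norm_mul, norm_pow, Real.norm_eq_abs, Real.norm_eq_abs, abs_of_nonneg (hInn ω),
      abs_of_nonneg (Real.exp_nonneg _)]
    exact mul_le_mul_of_nonneg_left
      (Real.exp_le_exp.2 (by nlinarith [hInn ω])) h1
  have hIntge : ∀ m ≤ K, ∀ s : ℝ, s₀ ≤ s →
      Integrable (fun ω => I ω ^ m * Real.exp (-s * I ω)) μ := by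
    intro m hm s hs
    refine (hmom m hm).mono (hmeas m s) (ae_of_all _ fun ω => ?_)
    rw [Real.norm_eq_abs (I ω ^ m * Real.exp (-s₀ * I ω)),
      abs_of_nonneg (mul_nonneg (pow_nonneg (hInn ω) m) (Real.exp_nonneg _))]
    exact hbnd m s hs ω
  have hderiv : ∀ m : ℕ, m + 1 ≤ K → ∀ s : ℝ, s₀ < s →
      HasDerivAt (A m) (-(A (m+1) s)) s := by
    intro m hm s hs
    have hres := hasDerivAt_integral_of_dominated_loc_of_deriv_le
      (s := Metric.ball s (s - s₀)) (Metric.ball_mem_nhds s (sub_pos.2 hs))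
      (F := fun t ω => I ω ^ m * Real.exp (-t * I ω))
      (F' := fun t ω => -(I ω ^ (m+1) * Real.exp (-t * I ω)))
      (x₀ := s)
      (bound := fun ω => I ω ^ (m+1) * Real.exp (-s₀ * I ω))
      (Filter.Eventually.of_forall fun t => hmeas m t)
      (hIntge m (Nat.le_of_succ_le hm) s hs.le)
      ((hmeas (m+1) s).neg)
      (ae_of_all _ fun ω t ht => by
        rw [norm_neg]
        refine hbnd (m+1) t ?_ ω
        have := abs_lt.1 (by simpa [Real.dist_eq] using Metric.mem_ball.1 ht)
        linarith [this.1])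
      (hmom (m+1) hm)
      (ae_of_all _ fun ω t _ => by
        have h1 : HasDerivAt (fun u : ℝ => -u * I ω) (-I ω) t := by
          simpa using ((hasDerivAt_id t).neg.mul_const (I ω))
        have h2 : HasDerivAt (fun u : ℝ => Real.exp (-u * I ω))
            (Real.exp (-t * I ω) * (-I ω)) t := (Real.hasDerivAt_exp _).comp t h1
        have h3 := h2.const_mul (I ω ^ m)
        show HasDerivAt (fun x => I ω ^ m * Real.exp (-x * I ω))
          (-(I ω ^ (m+1) * Real.exp (-t * I ω))) t
        exact h3.congr_deriv (by rw [pow_succ]; ring))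
    have h2 := hres.2
    have : (∫ ω, -(I ω ^ (m+1) * Real.exp (-s * I ω)) ∂μ) = -(A (m+1) s) := by
      rw [integral_neg]
    rwa [this] at h2
  have hIter : ∀ m : ℕ, m ≤ K → ∀ s : ℝ, s₀ < s →
      iteratedDeriv m L s = (-1) ^ m * A m s := by
    intro m
    induction m with
    | zero =>
      intro _ s hs
      simp only [iteratedDeriv_zero, pow_zero, one_mul, hA]
      rw [hL s (hs₀.trans hs)]
    | succ m ih =>
      intro hm s hs
      rw [iteratedDeriv_succ]
      have hev : iteratedDeriv m L =ᶠ[𝓝 s] fun u => (-1) ^ m * A m u := by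
        filter_upwards [isOpen_Ioi.mem_nhds hs] with u hu
        exact ih (Nat.le_of_succ_le hm) u hu
      rw [hev.deriv_eq]
      have : HasDerivAt (fun u => (-1:ℝ) ^ m * A m u) ((-1)^m * (-(A (m+1) s))) s :=
        (hderiv m hm s hs).const_mul _
      rw [this.deriv]
      ring
  -- continuity of A n from the right at s₀
  have hTendA : Tendsto (A n) (𝓝[>] s₀) (𝓝 (A n s₀)) := by
    refine tendsto_integral_filter_of_dominated_convergence
      (fun ω => I ω ^ n * Real.exp (-s₀ * I ω)) ?_ ?_ (hmom n hn) ?_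
    · exact Filter.Eventually.of_forall fun s => hmeas n s
    · filter_upwards [self_mem_nhdsWithin] with s hs
      exact ae_of_all _ fun ω => hbnd n s (le_of_lt hs) ω
    · refine ae_of_all _ fun ω => ?_
      have hcont : Continuous (fun s : ℝ => I ω ^ n * Real.exp (-s * I ω)) := by
        continuity
      exact (hcont.tendsto s₀).mono_left nhdsWithin_le_nhds
  have hContIter : ContinuousAt (iteratedDeriv n L) s₀ := by
    have : Continuous (iteratedDeriv n L) :=
      hLd.continuous_iteratedDeriv n (by exact_mod_cast hn)
    exact this.continuousAt
  have hT1 : Tendsto (iteratedDeriv n L) (𝓝[>] s₀) (𝓝 (iteratedDeriv n L s₀)) :=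
    hContIter.continuousWithinAt.tendsto
  have hT2 : Tendsto (iteratedDeriv n L) (𝓝[>] s₀) (𝓝 ((-1) ^ n * A n s₀)) := by
    refine Tendsto.congr' ?_ (((hTendA.const_mul ((-1:ℝ)^n))))
    filter_upwards [self_mem_nhdsWithin] with s hs
    exact (hIter n hn s hs).symm
  exact tendsto_nhds_unique hT1 hT2

/-- Gamma(M,1) coverage with two independent interference terms:
Pr(G > β(c₁I₁+c₂I₂)) = Σ_{n<M} ((-β)^n/n!) Σ_{n₁≤n} C(n,n₁) c₁^{n₁} c₂^{n-n₁}
  L₁^{(n₁)}(βc₁) L₂^{(n-n₁)}(βc₂). -/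
theorem stmt4 {Ω : Type*} [MeasurableSpace Ω] (μ : Measure Ω) [IsProbabilityMeasure μ]
    (M : ℕ) (hM : 1 ≤ M) (G I₁ I₂ : Ω → ℝ)
    (hGm : Measurable G) (hI1m : Measurable I₁) (hI2m : Measurable I₂)
    (hI1nn : ∀ ω, 0 ≤ I₁ ω) (hI2nn : ∀ ω, 0 ≤ I₂ ω)
    (hindep : iIndepFun (m := fun _ : Fin 3 => Real.measurableSpace) ![G, I₁, I₂] μ)
    (hG : ∀ t : ℝ, 0 ≤ t →
      (μ {ω | G ω > t}).toReal
        = ∫ x in Set.Ioi t, x ^ (M - 1) * Real.exp (-x) / (M - 1).factorial)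
    (L₁ L₂ : ℝ → ℝ)
    (hL1 : ∀ s : ℝ, 0 < s → L₁ s = ∫ ω, Real.exp (-s * I₁ ω) ∂μ)
    (hL2 : ∀ s : ℝ, 0 < s → L₂ s = ∫ ω, Real.exp (-s * I₂ ω) ∂μ)
    (hL1d : ContDiff ℝ (M - 1 : ℕ) L₁) (hL2d : ContDiff ℝ (M - 1 : ℕ) L₂)
    (c₁ c₂ β : ℝ) (hc1 : 0 < c₁) (hc2 : 0 < c₂) (hβ : 0 < β)
    (hmom1 : ∀ n ≤ M - 1, Integrable (fun ω => I₁ ω ^ n * Real.exp (-(β * c₁) * I₁ ω)) μ)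
    (hmom2 : ∀ n ≤ M - 1, Integrable (fun ω => I₂ ω ^ n * Real.exp (-(β * c₂) * I₂ ω)) μ) :
    (μ {ω | G ω > β * (c₁ * I₁ ω + c₂ * I₂ ω)}).toReal
      = ∑ n ∈ Finset.range M, ((-β) ^ n / n.factorial) *
          ∑ n₁ ∈ Finset.range (n + 1), (n.choose n₁ : ℝ) * c₁ ^ n₁ * c₂ ^ (n - n₁) *
            iteratedDeriv n₁ L₁ (β * c₁) * iteratedDeriv (n - n₁) L₂ (β * c₂) := by
  have hM1 : M - 1 + 1 = M := Nat.succ_pred_eq_of_pos hM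
  set T : Ω → ℝ := fun ω => β * (c₁ * I₁ ω + c₂ * I₂ ω) with hT
  have hTm : Measurable T := ((hI1m.const_mul c₁).add (hI2m.const_mul c₂)).const_mul β
  have hTnn : ∀ ω, 0 ≤ T ω := fun ω => mul_nonneg hβ.le
    (add_nonneg (mul_nonneg hc1.le (hI1nn ω)) (mul_nonneg hc2.le (hI2nn ω)))
  set F : ℝ → ℝ := fun t => ∑ n ∈ Finset.range M, t ^ n * Real.exp (-t) / n.factorial
    with hFdef
  have hFc : Continuous F := by
    apply continuous_finset_sum
    intro n _
    exact ((continuous_pow n).mul (Real.continuous_exp.comp continuous_neg)).div_const _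
  have htail : ∀ t : ℝ, 0 ≤ t → (μ {ω | G ω > t}).toReal = F t := by
    intro t ht
    rw [hG t ht, gamma_tail (M - 1) t ht, hM1]
  have hofReal : ∀ t : ℝ, 0 ≤ t → μ {ω | G ω > t} = ENNReal.ofReal (F t) := by
    intro t ht
    rw [← htail t ht, ENNReal.ofReal_toReal (measure_ne_top μ _)]
  have hF0 : ∀ t : ℝ, 0 ≤ t → 0 ≤ F t := fun t ht => (htail t ht) ▸ ENNReal.toReal_nonneg
  have hF1 : ∀ t : ℝ, 0 ≤ t → F t ≤ 1 := by
    intro t ht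
    rw [← htail t ht]
    have := prob_le_one (μ := μ) (s := {ω | G ω > t})
    simpa using ENNReal.toReal_mono ENNReal.one_ne_top this
  -- independence
  have hfin : ∀ i : Fin 3, Measurable (![G, I₁, I₂] i) := by
    intro i; fin_cases i <;> assumption
  have hPair : IndepFun (fun ω => (I₁ ω, I₂ ω)) G μ :=
    hindep.indepFun_prodMk hfin 1 2 0 (by decide) (by decide)
  have hφ : Measurable (fun p : ℝ × ℝ => β * (c₁ * p.1 + c₂ * p.2)) := by
    fun_prop
  have hTG : IndepFun T G μ := hPair.comp hφ measurable_id
  have hmap : μ.map (fun ω => (T ω, G ω)) = (μ.map T).prod (μ.map G) :=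
    (indepFun_iff_map_prod_eq_prod_map_map hTm.aemeasurable hGm.aemeasurable).1 hTG
  have hsetmeas : MeasurableSet {p : ℝ × ℝ | p.1 < p.2} :=
    measurableSet_lt measurable_fst measurable_snd
  have key1 : μ {ω | G ω > T ω} = ∫⁻ t, (μ.map G) (Set.Ioi t) ∂(μ.map T) := by
    have h1 : {ω | G ω > T ω} = (fun ω => (T ω, G ω)) ⁻¹' {p : ℝ × ℝ | p.1 < p.2} := rfl
    rw [h1, ← Measure.map_apply (hTm.prodMk hGm) hsetmeas, hmap,
      Measure.prod_apply hsetmeas]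
    rfl
  have haeT : ∀ᵐ t ∂(μ.map T), t ∈ Set.Ici (0 : ℝ) :=
    (ae_map_iff hTm.aemeasurable measurableSet_Ici).2 (ae_of_all _ fun ω => hTnn ω)
  have key2 : ∫⁻ t, (μ.map G) (Set.Ioi t) ∂(μ.map T)
      = ∫⁻ t, ENNReal.ofReal (F t) ∂(μ.map T) := by
    refine lintegral_congr_ae (haeT.mono fun t ht => ?_)
    show (Measure.map G μ) (Set.Ioi t) = ENNReal.ofReal (F t)
    rw [Measure.map_apply hGm measurableSet_Ioi]
    exact hofReal t ht
  haveI : IsProbabilityMeasure (μ.map T) := Measure.isProbabilityMeasure_map hTm.aemeasurable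
  have hFint : Integrable F (μ.map T) := by
    refine Integrable.mono' (integrable_const 1) hFc.aestronglyMeasurable ?_
    filter_upwards [haeT] with t ht
    rw [Real.norm_eq_abs, abs_of_nonneg (hF0 t ht)]
    exact hF1 t ht
  have key3 : ∫⁻ t, ENNReal.ofReal (F t) ∂(μ.map T)
      = ENNReal.ofReal (∫ t, F t ∂(μ.map T)) :=
    (ofReal_integral_eq_lintegral_ofReal hFint (haeT.mono fun t ht => hF0 t ht)).symm
  have key4 : ∫ t, F t ∂(μ.map T) = ∫ ω, F (T ω) ∂μ :=
    integral_map hTm.aemeasurable hFc.aestronglyMeasurable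
  have hLHS : (μ {ω | G ω > T ω}).toReal = ∫ ω, F (T ω) ∂μ := by
    rw [key1, key2, key3, key4, ENNReal.toReal_ofReal
      (integral_nonneg fun ω => hF0 _ (hTnn ω))]
  rw [hLHS]
  -- now the algebraic part
  set f₁ : ℕ → Ω → ℝ := fun m ω => I₁ ω ^ m * Real.exp (-(β * c₁) * I₁ ω) with hf1
  set f₂ : ℕ → Ω → ℝ := fun m ω => I₂ ω ^ m * Real.exp (-(β * c₂) * I₂ ω) with hf2
  have hg1 : ∀ s : ℝ, ∀ m : ℕ, Measurable (fun x : ℝ => x ^ m * Real.exp (-s * x)) := by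
    intro s m; fun_prop
  have hI12 : IndepFun I₁ I₂ μ := hindep.indepFun (i := 1) (j := 2) (by decide)
  have hf12ind : ∀ m k : ℕ, IndepFun (f₁ m) (f₂ k) μ := fun m k =>
    hI12.comp (hg1 (β * c₁) m) (hg1 (β * c₂) k)
  have hprodint : ∀ m ≤ M - 1, ∀ k ≤ M - 1,
      Integrable (fun ω => f₁ m ω * f₂ k ω) μ := fun m hm k hk =>
    (hf12ind m k).integrable_mul (hmom1 m hm) (hmom2 k hk)
  have hprodeq : ∀ m k : ℕ,
      ∫ ω, f₁ m ω * f₂ k ω ∂μ = (∫ ω, f₁ m ω ∂μ) * ∫ ω, f₂ k ω ∂μ := fun m k =>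
    (hf12ind m k).integral_mul_eq_mul_integral
      ((hg1 (β * c₁) m).comp hI1m).aestronglyMeasurable
      ((hg1 (β * c₂) k).comp hI2m).aestronglyMeasurable
  have hpt : ∀ ω, F (T ω) = ∑ n ∈ Finset.range M, (1 / (n.factorial : ℝ)) *
      ∑ n₁ ∈ Finset.range (n + 1),
        ((n.choose n₁ : ℝ) * β ^ n * c₁ ^ n₁ * c₂ ^ (n - n₁)) *
          (f₁ n₁ ω * f₂ (n - n₁) ω) := by
    intro ω
    refine Finset.sum_congr rfl fun n _ => ?_
    have hTsplit : T ω = (β * c₁) * I₁ ω + (β * c₂) * I₂ ω := by rw [hT]; ring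
    have hexp : Real.exp (-T ω)
        = Real.exp (-(β * c₁) * I₁ ω) * Real.exp (-(β * c₂) * I₂ ω) := by
      rw [← Real.exp_add, hTsplit]; ring_nf
    rw [hexp, hTsplit, add_pow, Finset.sum_mul, Finset.sum_div, Finset.mul_sum]
    refine Finset.sum_congr rfl fun k hk => ?_
    have hkn : k ≤ n := Nat.lt_succ_iff.mp (Finset.mem_range.mp hk)
    have hβn : β ^ k * β ^ (n - k) = β ^ n := by
      rw [← pow_add, Nat.add_sub_cancel' hkn]
    rw [hf1, hf2]
    simp only [mul_pow]
    field_simp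
    rw [← hβn]
    ring
  rw [integral_congr_ae (ae_of_all _ hpt)]
  have hintn : ∀ n ∈ Finset.range M, ∀ k ∈ Finset.range (n + 1),
      Integrable (fun ω => ((n.choose k : ℝ) * β ^ n * c₁ ^ k * c₂ ^ (n - k)) *
        (f₁ k ω * f₂ (n - k) ω)) μ := by
    intro n hn k hk
    have hnM : n ≤ M - 1 := Nat.le_sub_one_of_lt (Finset.mem_range.mp hn)
    have hkM : k ≤ M - 1 := le_trans (Nat.lt_succ_iff.mp (Finset.mem_range.mp hk)) hnM
    have hkM2 : n - k ≤ M - 1 := le_trans (Nat.sub_le n k) hnM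
    exact (hprodint k hkM (n - k) hkM2).const_mul _
  rw [integral_finset_sum _ (fun n hn => ((integrable_finset_sum _ (hintn n hn)).const_mul _))]
  refine Finset.sum_congr rfl fun n hn => ?_
  have hnM : n ≤ M - 1 := Nat.le_sub_one_of_lt (Finset.mem_range.mp hn)
  rw [integral_const_mul, integral_finset_sum _ (hintn n hn)]
  rw [Finset.mul_sum, Finset.mul_sum]
  refine Finset.sum_congr rfl fun k hk => ?_
  have hkn : k ≤ n := Nat.lt_succ_iff.mp (Finset.mem_range.mp hk)
  have hkM : k ≤ M - 1 := le_trans hkn hnM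
  have hkM2 : n - k ≤ M - 1 := le_trans (Nat.sub_le n k) hnM
  have hiD1 : iteratedDeriv k L₁ (β * c₁) = (-1) ^ k * ∫ ω, f₁ k ω ∂μ :=
    laplace_iteratedDeriv μ I₁ hI1m hI1nn L₁ (M - 1) hL1d (β * c₁)
      (mul_pos hβ hc1) hL1 hmom1 k hkM
  have hiD2 : iteratedDeriv (n - k) L₂ (β * c₂) = (-1) ^ (n - k) * ∫ ω, f₂ (n - k) ω ∂μ :=
    laplace_iteratedDeriv μ I₂ hI2m hI2nn L₂ (M - 1) hL2d (β * c₂)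
      (mul_pos hβ hc2) hL2 hmom2 (n - k) hkM2
  rw [integral_const_mul, hprodeq k (n - k), hiD1, hiD2]
  have hsign : ((-β) ^ n : ℝ) * ((-1) ^ k * (-1) ^ (n - k)) = β ^ n := by
    rw [← pow_add, Nat.add_sub_cancel' hkn, ← mul_pow, neg_mul_neg, mul_one]
  set A₁ := ∫ ω, f₁ k ω ∂μ
  set A₂ := ∫ ω, f₂ (n - k) ω ∂μ
  linear_combination (-((n.choose k : ℝ) * c₁ ^ k * c₂ ^ (n - k) * A₁ * A₂)
    / (n.factorial : ℝ)) * hsign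
end

section
/- Let N ≥ 1 be an integer-valued random variable with Pr(N = n) = (3.5^{3.5} Γ(n+3.5) ρ^{n-1}) / (Γ(n) Γ(3.5) (3.5+ρ)^{n+3.5}) for n ≥ 1 and some ρ > 0. Then Σ_{n=1}^∞ (1/n) Pr(N = n) = (1/ρ)(1 - (1 + ρ/3.5)^{-3.5}). -/
open Real

open MeasureTheory Set in
private lemma my_exp_tsum_div (y : ℝ) : ∑' n : ℕ, y ^ n / n.factorial = Real.exp y := by
  rw [Real.exp_eq_exp_ℝ, NormedSpace.exp_eq_tsum_div]

open MeasureTheory Set in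
private lemma my_lint_term {b c : ℝ} (hb : 0 < b) (hc : 0 ≤ c) :
    ∫⁻ t in Ioi (0:ℝ), ENNReal.ofReal (c * (Real.exp (-t) * t ^ (b - 1)))
      = ENNReal.ofReal (c * Real.Gamma b) := by
  rw [← MeasureTheory.ofReal_integral_eq_lintegral_ofReal]
  · rw [MeasureTheory.integral_const_mul, ← Real.Gamma_eq_integral hb]
  · exact (Real.GammaIntegral_convergent hb).const_mul c
  · filter_upwards [ae_restrict_mem measurableSet_Ioi] with t ht
    have h0 : (0:ℝ) < t := ht
    positivity

open MeasureTheory Set in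
private lemma my_lint_total {a r : ℝ} (ha : 0 < a) (hr : 0 < r) :
    ∫⁻ t in Ioi (0:ℝ), ENNReal.ofReal (t ^ (a - 1) * Real.exp (-(r * t)))
      = ENNReal.ofReal ((1 / r) ^ a * Real.Gamma a) := by
  rw [← MeasureTheory.ofReal_integral_eq_lintegral_ofReal]
  · rw [Real.integral_rpow_mul_exp_neg_mul_Ioi ha hr]
  · have h := integrableOn_rpow_mul_exp_neg_mul_rpow (p := 1) (s := a - 1) (b := r)
      (by linarith) one_pos hr
    refine h.congr_fun (fun t ht => ?_) measurableSet_Ioi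
    dsimp only
    rw [Real.rpow_one, neg_mul]
  · filter_upwards [ae_restrict_mem measurableSet_Ioi] with t ht
    have h0 : (0:ℝ) < t := ht
    positivity

open MeasureTheory Set in
/-- Generalized binomial series: for `a > 0` and `0 ≤ x < 1`,
`∑ Γ(m+a) x^m / m! = Γ(a) (1-x)^(-a)`. -/
private lemma my_binom_hasSum {a x : ℝ} (ha : 0 < a) (hx0 : 0 ≤ x) (hx1 : x < 1) :
    HasSum (fun m : ℕ => Real.Gamma ((m : ℝ) + a) * x ^ m / m.factorial)
      (Real.Gamma a * (1 - x) ^ (-a)) := by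
  have hr : (0:ℝ) < 1 - x := by linarith
  have hfnn : ∀ m : ℕ, 0 ≤ Real.Gamma ((m : ℝ) + a) * x ^ m / m.factorial := fun m => by
    have hg : 0 < Real.Gamma ((m:ℝ) + a) := Real.Gamma_pos_of_pos (by positivity)
    positivity
  have step1 : ∀ m : ℕ, ENNReal.ofReal (Real.Gamma ((m : ℝ) + a) * x ^ m / m.factorial)
      = ∫⁻ t in Ioi (0:ℝ), ENNReal.ofReal
          (x ^ m / m.factorial * (Real.exp (-t) * t ^ ((m:ℝ) + a - 1))) := by
    intro m
    rw [my_lint_term (by positivity) (by positivity)]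
    congr 1
    ring
  have step2 : ∀ t ∈ Ioi (0:ℝ),
      (∑' m : ℕ, ENNReal.ofReal (x ^ m / m.factorial * (Real.exp (-t) * t ^ ((m:ℝ) + a - 1))))
      = ENNReal.ofReal (t ^ (a - 1) * Real.exp (-((1 - x) * t))) := by
    intro t ht
    have ht0 : (0:ℝ) < t := ht
    have heq : ∀ m : ℕ, x ^ m / m.factorial * (Real.exp (-t) * t ^ ((m:ℝ) + a - 1))
        = (x * t) ^ m / m.factorial * (Real.exp (-t) * t ^ (a - 1)) := by
      intro m
      rw [show (m:ℝ) + a - 1 = (m:ℝ) + (a - 1) by ring, Real.rpow_add ht0,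
        Real.rpow_natCast, mul_pow]
      ring
    simp_rw [heq]
    rw [← ENNReal.ofReal_tsum_of_nonneg (fun m => by positivity)
      ((Real.summable_pow_div_factorial (x * t)).mul_right _),
      tsum_mul_right, my_exp_tsum_div]
    congr 1
    rw [show -((1 - x) * t) = x * t + -t by ring, Real.exp_add]
    ring
  have hmeas : ∀ m : ℕ, AEMeasurable
      (fun t : ℝ => ENNReal.ofReal (x ^ m / m.factorial * (Real.exp (-t) * t ^ ((m:ℝ) + a - 1))))
      (volume.restrict (Ioi 0)) := by
    intro m
    apply Measurable.aemeasurable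
    fun_prop
  have hENN : (∑' m : ℕ, ENNReal.ofReal (Real.Gamma ((m : ℝ) + a) * x ^ m / m.factorial))
      = ENNReal.ofReal ((1 / (1 - x)) ^ a * Real.Gamma a) := by
    calc (∑' m : ℕ, ENNReal.ofReal (Real.Gamma ((m : ℝ) + a) * x ^ m / m.factorial))
        = ∑' m : ℕ, ∫⁻ t in Ioi (0:ℝ), ENNReal.ofReal
            (x ^ m / m.factorial * (Real.exp (-t) * t ^ ((m:ℝ) + a - 1))) :=
          tsum_congr step1
      _ = ∫⁻ t in Ioi (0:ℝ), ∑' m : ℕ, ENNReal.ofReal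
            (x ^ m / m.factorial * (Real.exp (-t) * t ^ ((m:ℝ) + a - 1))) :=
          (MeasureTheory.lintegral_tsum hmeas).symm
      _ = ∫⁻ t in Ioi (0:ℝ), ENNReal.ofReal (t ^ (a - 1) * Real.exp (-((1 - x) * t))) :=
          setLIntegral_congr_fun measurableSet_Ioi step2
      _ = ENNReal.ofReal ((1 / (1 - x)) ^ a * Real.Gamma a) := my_lint_total ha hr
  have hsum : Summable (fun m : ℕ => Real.Gamma ((m : ℝ) + a) * x ^ m / m.factorial) := by
    have h := ENNReal.summable_toReal (f := fun m : ℕ =>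
      ENNReal.ofReal (Real.Gamma ((m : ℝ) + a) * x ^ m / m.factorial))
      (by rw [hENN]; exact ENNReal.ofReal_ne_top)
    exact h.congr fun m => ENNReal.toReal_ofReal (hfnn m)
  have htsum : (∑' m : ℕ, Real.Gamma ((m : ℝ) + a) * x ^ m / m.factorial)
      = Real.Gamma a * (1 - x) ^ (-a) := by
    have hv : (1 / (1 - x)) ^ a * Real.Gamma a = Real.Gamma a * (1 - x) ^ (-a) := by
      rw [Real.rpow_neg hr.le, one_div, Real.inv_rpow hr.le, mul_comm]
    calc (∑' m : ℕ, Real.Gamma ((m : ℝ) + a) * x ^ m / m.factorial)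
        = ∑' m : ℕ, (ENNReal.ofReal (Real.Gamma ((m : ℝ) + a) * x ^ m / m.factorial)).toReal :=
          tsum_congr fun m => (ENNReal.toReal_ofReal (hfnn m)).symm
      _ = (∑' m : ℕ, ENNReal.ofReal (Real.Gamma ((m : ℝ) + a) * x ^ m / m.factorial)).toReal :=
          (ENNReal.tsum_toReal_eq fun m => ENNReal.ofReal_ne_top).symm
      _ = ((1 / (1 - x)) ^ a * Real.Gamma a) := by
          rw [hENN]
          exact ENNReal.toReal_ofReal
            (mul_nonneg (Real.rpow_nonneg (by positivity) _) (Real.Gamma_pos_of_pos ha).le)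
      _ = Real.Gamma a * (1 - x) ^ (-a) := hv
  exact htsum ▸ hsum.hasSum

/-- For the size-biased negative-binomial-type p.m.f.
Pr(N=n) = 3.5^{3.5}Γ(n+3.5)ρ^{n-1}/(Γ(n)Γ(3.5)(3.5+ρ)^{n+3.5}) (n ≥ 1),
one has Σ_{n≥1} (1/n)Pr(N=n) = (1/ρ)(1 - (1+ρ/3.5)^{-3.5}). -/
theorem stmt6 (ρ : ℝ) (hρ : 0 < ρ) :
    ∑' n : ℕ, (1 / ((n : ℝ) + 1)) *
        ((3.5 : ℝ) ^ (3.5 : ℝ) * Real.Gamma ((n : ℝ) + 1 + 3.5) * ρ ^ n /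
          (Real.Gamma ((n : ℝ) + 1) * Real.Gamma 3.5 * (3.5 + ρ) ^ ((n : ℝ) + 1 + 3.5)))
      = (1 / ρ) * (1 - (1 + ρ / 3.5) ^ (-(3.5 : ℝ))) := by
  have h35 : (0:ℝ) < 3.5 := by norm_num
  have hs : (0:ℝ) < 3.5 + ρ := by linarith
  set x : ℝ := ρ / (3.5 + ρ) with hxdef
  have hx0 : 0 ≤ x := by positivity
  have hx1 : x < 1 := by rw [hxdef, div_lt_one hs]; linarith
  have key := my_binom_hasSum h35 hx0 hx1
  have hsummable := key.summable
  have h1x : 1 - x = 3.5 / (3.5 + ρ) := by rw [hxdef]; field_simp; ring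
  set K : ℝ := 3.5 ^ (3.5:ℝ) / ((3.5 + ρ) ^ (3.5:ℝ) * (ρ * Real.Gamma 3.5)) with hK
  have hQ : (0:ℝ) < (3.5 + ρ) ^ (3.5:ℝ) := Real.rpow_pos_of_pos hs _
  have hR : (0:ℝ) < (3.5:ℝ) ^ (3.5:ℝ) := Real.rpow_pos_of_pos h35 _
  have hΓ : (0:ℝ) < Real.Gamma 3.5 := Real.Gamma_pos_of_pos h35
  have hterm : ∀ n : ℕ,
      (1 / ((n : ℝ) + 1)) * ((3.5 : ℝ) ^ (3.5 : ℝ) * Real.Gamma ((n : ℝ) + 1 + 3.5) * ρ ^ n /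
        (Real.Gamma ((n : ℝ) + 1) * Real.Gamma 3.5 * (3.5 + ρ) ^ ((n : ℝ) + 1 + 3.5)))
      = K * (Real.Gamma (((n+1 : ℕ) : ℝ) + 3.5) * x ^ (n+1) / (n+1 : ℕ).factorial) := by
    intro n
    have hfact : Real.Gamma ((n : ℝ) + 1) = n.factorial := Real.Gamma_nat_eq_factorial n
    have hpow : (3.5 + ρ) ^ ((n : ℝ) + 1 + 3.5) = (3.5 + ρ) ^ (n+1 : ℕ) * (3.5 + ρ) ^ (3.5:ℝ) := by
      rw [← Real.rpow_natCast (3.5 + ρ) (n+1), ← Real.rpow_add hs]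
      congr 1
      push_cast
      ring
    have hxpow : x ^ (n+1) = ρ ^ (n+1) / (3.5 + ρ) ^ (n+1) := by rw [hxdef, div_pow]
    have hΓeq : Real.Gamma (((n+1 : ℕ) : ℝ) + 3.5) = Real.Gamma ((n : ℝ) + 1 + 3.5) := by
      congr 1
      push_cast
      ring
    rw [hfact, hpow, hxpow, hΓeq, hK, Nat.factorial_succ]
    have h2 : ((3.5:ℝ) + ρ) ^ (n+1 : ℕ) ≠ 0 := pow_ne_zero _ hs.ne'
    have h4 : ((n:ℝ) + 1) ≠ 0 := by positivity
    have h5 : (n.factorial : ℝ) ≠ 0 := Nat.cast_ne_zero.mpr n.factorial_ne_zero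
    field_simp
    push_cast
    ring
  rw [tsum_congr hterm, tsum_mul_left]
  have h0 := Summable.tsum_eq_zero_add hsummable
  rw [key.tsum_eq] at h0
  have hf0 : Real.Gamma (((0:ℕ) : ℝ) + 3.5) * x ^ (0:ℕ) / (0:ℕ).factorial = Real.Gamma 3.5 := by
    norm_num
  have hshift : (∑' n : ℕ, Real.Gamma (((n+1 : ℕ) : ℝ) + 3.5) * x ^ (n+1) / (n+1 : ℕ).factorial)
      = Real.Gamma 3.5 * (1 - x) ^ (-(3.5:ℝ)) - Real.Gamma 3.5 := by
    rw [h0, hf0]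
    ring
  rw [hshift]
  have e1 : (1 - x) ^ (-(3.5:ℝ)) = (3.5 + ρ) ^ (3.5:ℝ) / 3.5 ^ (3.5:ℝ) := by
    rw [h1x, Real.rpow_neg (by positivity), Real.div_rpow h35.le hs.le, inv_div]
  have e2 : (1 + ρ / 3.5) ^ (-(3.5:ℝ)) = 3.5 ^ (3.5:ℝ) / (3.5 + ρ) ^ (3.5:ℝ) := by
    rw [show (1:ℝ) + ρ / 3.5 = (3.5 + ρ) / 3.5 by field_simp,
      Real.rpow_neg (by positivity), Real.div_rpow hs.le h35.le, inv_div]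
  rw [e1, e2, hK]
  field_simp
end

section
/- For λ > 0, α > 2, r > 0, the function L(s) = exp(−(2π/α)λ s^{2/α} B'(2/α, 1−2/α, 1/(1+s r^{−α}))) satisfies L(s) = 1 − (2πλ r^{2−α}/(α(1 − 2/α))) s + o(s) as s → 0⁺. -/
open MeasureTheory Real Filter Asymptotics

private lemma intJ (b z : ℝ) (hb0 : 0 < b) :
    ∫ u in z..(1:ℝ), (1-u)^(b-1) = (1-z)^b/b := by
  have h := intervalIntegral.integral_comp_sub_left (fun v : ℝ => v^(b-1)) 1 (a := z) (b := 1)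
  rw [h]
  norm_num
  rw [integral_rpow (Or.inl (by linarith : (-1:ℝ) < b-1))]
  rw [sub_add_cancel, Real.zero_rpow hb0.ne']
  ring

private lemma intJint (b z : ℝ) (hb0 : 0 < b) :
    IntervalIntegrable (fun u : ℝ => (1-u)^(b-1)) volume z 1 := by
  have h := (intervalIntegral.intervalIntegrable_rpow' (a := 0) (b := 1-z)
    (by linarith : (-1:ℝ) < b-1)).comp_sub_left 1
  norm_num at h
  exact h.symm

private lemma Iint (a b z : ℝ) (ha1 : a < 1) (hz0 : 0 < z) (hz1 : z < 1) (hb0 : 0 < b) :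
    IntervalIntegrable (fun u : ℝ => u^(a-1)*(1-u)^(b-1)) volume z 1 := by
  apply ((intJint b z hb0).const_mul (z^(a-1))).mono_fun'
  · exact (by fun_prop : Measurable (fun u : ℝ => u^(a-1)*(1-u)^(b-1))).aestronglyMeasurable
  · apply ae_restrict_of_forall_mem measurableSet_uIoc
    intro u hu
    rw [Set.uIoc_of_le hz1.le] at hu
    have hu0 : 0 < u := lt_trans hz0 hu.1
    have h1u : 0 ≤ 1 - u := by linarith [hu.2]
    have h1 : u^(a-1) ≤ z^(a-1) := Real.rpow_le_rpow_of_nonpos hz0 hu.1.le (by linarith)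
    have h2 : (0:ℝ) ≤ (1-u)^(b-1) := Real.rpow_nonneg h1u _
    simp only [Real.norm_eq_abs, abs_mul]
    rw [abs_of_nonneg (Real.rpow_nonneg hu0.le _), abs_of_nonneg h2]
    exact mul_le_mul_of_nonneg_right h1 h2

private lemma Ibound (a b z : ℝ) (ha0 : 0 < a) (ha1 : a < 1) (hb0 : 0 < b) (hb1 : b < 1)
    (hz0 : 0 < z) (hz1 : z < 1) :
    (1-z)^b/b ≤ (∫ u in z..(1:ℝ), u^(a-1)*(1-u)^(b-1)) ∧
    (∫ u in z..(1:ℝ), u^(a-1)*(1-u)^(b-1)) ≤ z^(a-1) * ((1-z)^b/b) := by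
  have hIb := intJint b z hb0
  have hIf := Iint a b z ha1 hz0 hz1 hb0
  constructor
  · rw [← intJ b z hb0]
    apply intervalIntegral.integral_mono_on hz1.le hIb hIf
    intro u hu
    have hu0 : 0 < u := lt_of_lt_of_le hz0 hu.1
    have h2 : (0:ℝ) ≤ (1-u)^(b-1) := Real.rpow_nonneg (by linarith [hu.2]) _
    exact le_mul_of_one_le_left h2
      (Real.one_le_rpow_of_pos_of_le_one_of_nonpos hu0 hu.2 (by linarith))
  · rw [← intJ b z hb0, ← intervalIntegral.integral_const_mul]
    apply intervalIntegral.integral_mono_on hz1.le hIf (hIb.const_mul _)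
    intro u hu
    have hu0 : 0 < u := lt_of_lt_of_le hz0 hu.1
    have h2 : (0:ℝ) ≤ (1-u)^(b-1) := Real.rpow_nonneg (by linarith [hu.2]) _
    exact mul_le_mul_of_nonneg_right
      (Real.rpow_le_rpow_of_nonpos hz0 hu.1 (by linarith)) h2

private lemma Ekey (lam α r s : ℝ) (hα : 2 < α) (hr : 0 < r) (hs : 0 < s) :
    (2*π/α)*lam*s^(2/α) * ((1 - 1/(1+s*r^(-α)))^(1-2/α)/(1-2/α))
      = (2*π*lam*r^(2-α)/(α*(1-2/α))) * (1+s*r^(-α))^(-(1-2/α)) * s := by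
  have hα0 : (0:ℝ) < α := by linarith
  have hb0 : 0 < 1-2/α := by
    have : 2/α < 1 := (div_lt_one hα0).mpr (by linarith)
    linarith
  have hx : 0 < s*r^(-α) := by positivity
  have h1x : (0:ℝ) < 1+s*r^(-α) := by linarith
  have h1z : 1 - 1/(1+s*r^(-α)) = (s*r^(-α))/(1+s*r^(-α)) := by field_simp; ring
  have e1 : (r^(-α))^(1-2/α) = r^(2-α) := by
    rw [← Real.rpow_mul hr.le]
    congr 1
    field_simp
    ring
  have e2 : s^(2/α)*s^(1-2/α) = s := by
    rw [← Real.rpow_add hs]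
    norm_num
  rw [h1z, Real.div_rpow hx.le h1x.le,
      Real.mul_rpow hs.le (Real.rpow_nonneg hr.le _), e1, Real.rpow_neg h1x.le]
  have hP : (0:ℝ) < (1+s*r^(-α))^(1-2/α) := Real.rpow_pos_of_pos h1x _
  set P := (1+s*r^(-α))^(1-2/α) with hP_def
  set S1 := s^(2/α) with hS1
  set S2 := s^(1-2/α) with hS2
  rw [← e2]
  field_simp

private lemma exp_littleo : (fun t : ℝ => Real.exp (-t) - 1 + t) =o[nhds 0] (id : ℝ → ℝ) := by
  have h2 : HasDerivAt (fun t : ℝ => Real.exp (-t)) (-1) 0 := by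
    simpa using (hasDerivAt_neg (0:ℝ)).exp
  have h1 : HasDerivAt (fun t : ℝ => Real.exp (-t) + t) 0 0 := by
    exact (h2.add (hasDerivAt_id' 0)).congr_deriv (by norm_num)
  have h3 := hasDerivAt_iff_isLittleO.mp h1
  simp only [sub_zero, smul_zero, sub_zero, neg_zero, Real.exp_zero] at h3
  refine (h3.congr' ?_ ?_ :)
  · filter_upwards with t
    ring
  · filter_upwards with t
    rfl

/-- First-order expansion of the interference Laplace transform at s → 0⁺:
L(s) = 1 − (2πλ r^{2−α}/(α(1−2/α))) s + o(s). -/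
theorem stmt11 (lam α r : ℝ) (hlam : 0 < lam) (hα : 2 < α) (hr : 0 < r) :
    (fun s : ℝ =>
        Real.exp (-((2 * π / α) * lam * s ^ (2 / α) *
          ∫ u in (1 / (1 + s * r ^ (-α)))..(1 : ℝ),
            u ^ (2 / α - 1) * (1 - u) ^ ((1 - 2 / α) - 1)))
        - (1 - (2 * π * lam * r ^ (2 - α) / (α * (1 - 2 / α))) * s))
      =o[nhdsWithin 0 (Set.Ioi 0)] (id : ℝ → ℝ) := by
  have hα0 : (0:ℝ) < α := by linarith
  have hb0 : 0 < 1-2/α := by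
    have : 2/α < 1 := (div_lt_one hα0).mpr (by linarith)
    linarith
  have ha0 : 0 < 2/α := by positivity
  have ha1 : 2/α < 1 := by linarith
  set l := nhdsWithin (0:ℝ) (Set.Ioi 0) with hl
  set C : ℝ := 2*π*lam*r^(2-α)/(α*(1-2/α)) with hC_def
  set F : ℝ → ℝ := fun s => (2 * π / α) * lam * s ^ (2 / α) *
          ∫ u in (1 / (1 + s * r ^ (-α)))..(1 : ℝ),
            u ^ (2 / α - 1) * (1 - u) ^ ((1 - 2 / α) - 1) with hF_def
  have hC0 : 0 < C := by
    rw [hC_def]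
    have : (0:ℝ) < α*(1-2/α) := mul_pos hα0 hb0
    positivity
  -- basic positivity facts for s > 0
  have hxfact : ∀ s : ℝ, 0 < s → 0 < s * r^(-α) := fun s hs => by positivity
  have hzfact : ∀ s : ℝ, 0 < s →
      0 < 1/(1+s*r^(-α)) ∧ 1/(1+s*r^(-α)) < 1 := by
    intro s hs
    have hx := hxfact s hs
    have h1x : (0:ℝ) < 1 + s*r^(-α) := by linarith
    constructor
    · positivity
    · rw [div_lt_one h1x]; linarith
  -- sandwich for F s
  have key : ∀ s : ℝ, 0 < s →
      C * (1+s*r^(-α))^(-(1-2/α)) * s ≤ F s ∧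
      F s ≤ (1/(1+s*r^(-α)))^(2/α-1) * (C * (1+s*r^(-α))^(-(1-2/α)) * s) := by
    intro s hs
    obtain ⟨hz0, hz1⟩ := hzfact s hs
    obtain ⟨hlo, hhi⟩ := Ibound (2/α) (1-2/α) (1/(1+s*r^(-α))) ha0 ha1 hb0 (by linarith)
      hz0 hz1
    have hc0 : (0:ℝ) < (2*π/α)*lam := by positivity
    have hsa : (0:ℝ) < s^(2/α) := Real.rpow_pos_of_pos hs _
    have hE := Ekey lam α r s hα hr hs
    constructor
    · calc C * (1+s*r^(-α))^(-(1-2/α)) * s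
          = (2*π/α)*lam*s^(2/α) * ((1 - 1/(1+s*r^(-α)))^(1-2/α)/(1-2/α)) := hE.symm
        _ ≤ F s := by
            rw [hF_def]
            exact mul_le_mul_of_nonneg_left hlo (by positivity)
    · calc F s ≤ (2*π/α)*lam*s^(2/α) *
            ((1/(1+s*r^(-α)))^(2/α-1) * ((1 - 1/(1+s*r^(-α)))^(1-2/α)/(1-2/α))) := by
            rw [hF_def]
            exact mul_le_mul_of_nonneg_left hhi (by positivity)
        _ = (1/(1+s*r^(-α)))^(2/α-1) *
            ((2*π/α)*lam*s^(2/α) * ((1 - 1/(1+s*r^(-α)))^(1-2/α)/(1-2/α))) := by ring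
        _ = (1/(1+s*r^(-α)))^(2/α-1) * (C * (1+s*r^(-α))^(-(1-2/α)) * s) := by rw [hE]
  -- limits
  have hsid : Tendsto (fun s : ℝ => s) l (nhds 0) := tendsto_id.mono_left nhdsWithin_le_nhds
  have hxT : Tendsto (fun s : ℝ => s * r^(-α)) l (nhds 0) := by
    simpa using hsid.mul_const (r^(-α))
  have h1xT : Tendsto (fun s : ℝ => 1 + s * r^(-α)) l (nhds 1) := by
    simpa using tendsto_const_nhds.add hxT
  have hPow : Tendsto (fun s : ℝ => (1 + s * r^(-α))^(-(1-2/α))) l (nhds 1) := by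
    have := (Real.continuousAt_rpow_const 1 (-(1-2/α)) (Or.inl one_ne_zero)).tendsto.comp h1xT
    simpa [Function.comp_def] using this
  have hzT : Tendsto (fun s : ℝ => 1/(1 + s * r^(-α))) l (nhds 1) := by
    have := h1xT.inv₀ one_ne_zero
    simpa [one_div] using this
  have hzPow : Tendsto (fun s : ℝ => (1/(1 + s * r^(-α)))^(2/α-1)) l (nhds 1) := by
    have := (Real.continuousAt_rpow_const 1 (2/α-1) (Or.inl one_ne_zero)).tendsto.comp hzT
    simpa [Function.comp_def] using this
  have hmem : ∀ᶠ s in l, s ∈ Set.Ioi (0:ℝ) := eventually_mem_nhdsWithin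
  have hdiv : Tendsto (fun s : ℝ => F s / s) l (nhds C) := by
    apply tendsto_of_tendsto_of_tendsto_of_le_of_le'
      (g := fun s : ℝ => C * (1 + s * r^(-α))^(-(1-2/α)))
      (h := fun s : ℝ => (1/(1 + s * r^(-α)))^(2/α-1) * (C * (1 + s * r^(-α))^(-(1-2/α))))
    · simpa using tendsto_const_nhds.mul hPow
    · simpa using hzPow.mul (tendsto_const_nhds.mul hPow)
    · filter_upwards [hmem] with s hs
      rw [le_div_iff₀ hs]
      exact (key s hs).1
    · filter_upwards [hmem] with s hs
      rw [div_le_iff₀ hs]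
      calc F s ≤ (1/(1+s*r^(-α)))^(2/α-1) * (C * (1+s*r^(-α))^(-(1-2/α)) * s) := (key s hs).2
        _ = (1/(1+s*r^(-α)))^(2/α-1) * (C * (1+s*r^(-α))^(-(1-2/α))) * s := by ring
  have h1o : (fun s : ℝ => F s - C * s) =o[l] (id : ℝ → ℝ) := by
    apply isLittleO_of_tendsto'
    · filter_upwards [hmem] with s hs h
      exact absurd h (ne_of_gt hs)
    · have h0 : Tendsto (fun s : ℝ => F s / s - C) l (nhds 0) := by
        simpa using hdiv.sub_const C
      apply Tendsto.congr' ?_ h0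
      filter_upwards [hmem] with s hs
      have hsne : s ≠ 0 := ne_of_gt hs
      simp only [id_eq]
      field_simp
  have hO : F =O[l] (id : ℝ → ℝ) := by
    have h2 : (fun s : ℝ => C * s) =O[l] (id : ℝ → ℝ) := by
      simpa using (isBigO_refl (id : ℝ → ℝ) l).const_mul_left C
    have := h1o.isBigO.add h2
    apply this.congr_left
    intro s
    ring
  have hF0 : Tendsto F l (nhds 0) := by
    have h0 := hdiv.mul hsid
    rw [mul_zero] at h0
    apply Tendsto.congr' ?_ h0
    filter_upwards [hmem] with s hs
    exact div_mul_cancel₀ (F s) (ne_of_gt hs)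
  have hcomp : (fun s : ℝ => Real.exp (-(F s)) - 1 + F s) =o[l] F :=
    exp_littleo.comp_tendsto hF0
  have main : (fun s : ℝ => (Real.exp (-(F s)) - 1 + F s) + (-(F s - C * s))) =o[l]
      (id : ℝ → ℝ) := (hcomp.trans_isBigO hO).add h1o.neg_left
  have final : (fun s : ℝ => Real.exp (-(F s)) - (1 - C * s)) =o[l] (id : ℝ → ℝ) := by
    apply main.congr_left
    intro s
    ring
  simpa [hF_def] using final
end

section
/- Let I be a nonnegative random variable with E[I^{N}] < ∞, and set f(τ) = 2^{cτ} − 1 for a constant c > 0. Then 1 − Pr(Gamma(N,1) > f(τ)·I) = τ^N (c ln 2)^N E[I^N]/N! + o(τ^N) as τ → 0⁺, where the Gamma(N,1) variable is independent of I. -/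
open MeasureTheory Real Filter Asymptotics ProbabilityTheory
open Set

lemma aux_int_on (N : ℕ) (hN : 1 ≤ N) :
    IntegrableOn (fun x : ℝ => x ^ (N - 1) * Real.exp (-x) / (N - 1).factorial) (Set.Ioi 0) := by
  have h0 : (0:ℝ) < N := by exact_mod_cast hN
  have := (Real.GammaIntegral_convergent h0).div_const ((N-1).factorial : ℝ)
  refine IntegrableOn.congr_fun this ?_ measurableSet_Ioi
  intro x hx
  have : (x:ℝ) ^ ((N:ℝ) - 1) = x ^ (N - 1) := by
    rw [show ((N:ℝ) - 1) = ((N - 1 : ℕ) : ℝ) by push_cast [Nat.cast_sub hN]; ring]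
    exact Real.rpow_natCast x (N-1)
  simp [this]
  ring

lemma aux_int_one (N : ℕ) (hN : 1 ≤ N) :
    ∫ x in Set.Ioi (0:ℝ), x ^ (N - 1) * Real.exp (-x) / (N - 1).factorial = 1 := by
  have h0 : (0:ℝ) < N := by exact_mod_cast hN
  have hg := Real.Gamma_eq_integral h0
  have hg2 : Real.Gamma N = (N-1).factorial := by
    rw [show (N:ℝ) = ((N-1:ℕ):ℝ) + 1 by push_cast [Nat.cast_sub hN]; ring]
    exact Real.Gamma_nat_eq_factorial (N-1)
  have hcong : ∫ x in Set.Ioi (0:ℝ), Real.exp (-x) * x ^ ((N:ℝ) - 1)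
      = ∫ x in Set.Ioi (0:ℝ), x ^ (N - 1) * Real.exp (-x) := by
    refine setIntegral_congr_fun measurableSet_Ioi fun x hx => ?_
    have : (x:ℝ) ^ ((N:ℝ) - 1) = x ^ (N - 1) := by
      rw [show ((N:ℝ) - 1) = ((N - 1 : ℕ) : ℝ) by push_cast [Nat.cast_sub hN]; ring]
      exact Real.rpow_natCast x (N-1)
    rw [this]; ring
  rw [show (fun x : ℝ => x ^ (N - 1) * Real.exp (-x) / (N - 1).factorial)
      = fun x : ℝ => (x ^ (N - 1) * Real.exp (-x)) / ((N-1).factorial : ℝ) from rfl]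
  rw [integral_div, ← hcong, ← hg, hg2, div_self]
  exact_mod_cast (N-1).factorial_ne_zero

noncomputable def hfun (N : ℕ) (t : ℝ) : ℝ :=
  ∫ x in Set.Ioc 0 t, x ^ (N - 1) * Real.exp (-x) / (N - 1).factorial

lemma hfun_int_on (N : ℕ) (hN : 1 ≤ N) (t : ℝ) :
    IntegrableOn (fun x : ℝ => x ^ (N - 1) * Real.exp (-x) / (N - 1).factorial) (Set.Ioc 0 t) :=
  (aux_int_on N hN).mono_set Set.Ioc_subset_Ioi_self

lemma phi_nonneg (N : ℕ) (x : ℝ) (hx : 0 ≤ x) :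
    0 ≤ x ^ (N - 1) * Real.exp (-x) / (N - 1).factorial := by positivity

lemma hfun_mono (N : ℕ) (hN : 1 ≤ N) : Monotone (hfun N) := by
  intro s t hst
  refine setIntegral_mono_set (hfun_int_on N hN t) ?_ ?_
  · filter_upwards [ae_restrict_mem measurableSet_Ioc] with x hx
    exact phi_nonneg N x (le_of_lt hx.1)
  · exact HasSubset.Subset.eventuallyLE (Set.Ioc_subset_Ioc_right hst)

lemma hfun_eq (N : ℕ) (hN : 1 ≤ N) (t : ℝ) (ht : 0 ≤ t) :
    hfun N t = 1 - ∫ x in Set.Ioi t, x ^ (N - 1) * Real.exp (-x) / (N - 1).factorial := by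
  have hsplit : (∫ x in Set.Ioc 0 t, x ^ (N - 1) * Real.exp (-x) / (N - 1).factorial)
      + ∫ x in Set.Ioi t, x ^ (N - 1) * Real.exp (-x) / (N - 1).factorial
      = ∫ x in Set.Ioi 0, x ^ (N - 1) * Real.exp (-x) / (N - 1).factorial := by
    rw [← setIntegral_union (Set.Ioc_disjoint_Ioi le_rfl) measurableSet_Ioi
      (hfun_int_on N hN t) ((aux_int_on N hN).mono_set (Set.Ioi_subset_Ioi ht)),
      Set.Ioc_union_Ioi_eq_Ioi ht]
  rw [aux_int_one N hN] at hsplit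
  unfold hfun
  linarith

lemma pow_int_Ioc (N : ℕ) (hN : 1 ≤ N) (t : ℝ) (ht : 0 ≤ t) :
    ∫ x in Set.Ioc (0:ℝ) t, x ^ (N - 1) / (N - 1).factorial = t ^ N / N.factorial := by
  rw [integral_div, ← intervalIntegral.integral_of_le ht, integral_pow]
  rw [Nat.sub_add_cancel hN]
  have hfac : (N.factorial : ℝ) = N * (N-1).factorial := by
    exact_mod_cast (Nat.mul_factorial_pred (by omega)).symm
  have h1 : ((N - 1 : ℕ) : ℝ) + 1 = N := by push_cast [Nat.cast_sub hN]; ring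
  rw [h1, hfac]
  have hNne : (N:ℝ) ≠ 0 := by positivity
  have hfne : ((N-1).factorial : ℝ) ≠ 0 := by exact_mod_cast (N-1).factorial_ne_zero
  field_simp
  simp [zero_pow (show N ≠ 0 by omega)]

lemma hfun_le (N : ℕ) (hN : 1 ≤ N) (t : ℝ) (ht : 0 ≤ t) :
    hfun N t ≤ t ^ N / N.factorial := by
  rw [← pow_int_Ioc N hN t ht]
  refine setIntegral_mono_on (hfun_int_on N hN t) ?_ measurableSet_Ioc ?_
  · exact ((continuous_pow (N-1)).div_const _).integrableOn_Ioc
  · intro x hx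
    have hx0 : 0 ≤ x := le_of_lt hx.1
    have : Real.exp (-x) ≤ 1 := Real.exp_le_one_iff.mpr (by linarith)
    have hxp : (0:ℝ) ≤ x ^ (N-1) := by positivity
    have hfp : (0:ℝ) < (N-1).factorial := by exact_mod_cast (N-1).factorial_pos
    rw [div_le_div_iff_of_pos_right hfp]
    nlinarith

lemma hfun_ge (N : ℕ) (hN : 1 ≤ N) (t : ℝ) (ht : 0 ≤ t) :
    Real.exp (-t) * (t ^ N / N.factorial) ≤ hfun N t := by
  have := pow_int_Ioc N hN t ht
  calc Real.exp (-t) * (t ^ N / N.factorial)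
      = ∫ x in Set.Ioc (0:ℝ) t, Real.exp (-t) * (x ^ (N - 1) / (N - 1).factorial) := by
        rw [integral_const_mul, pow_int_Ioc N hN t ht]
    _ ≤ hfun N t := by
        refine setIntegral_mono_on ?_ (hfun_int_on N hN t) measurableSet_Ioc ?_
        · exact ((continuous_const.mul ((continuous_pow (N-1)).div_const _)).integrableOn_Ioc)
        · intro x hx
          have hxp : (0:ℝ) ≤ x ^ (N-1) := pow_nonneg (le_of_lt hx.1) _
          have hfp : (0:ℝ) < (N-1).factorial := by exact_mod_cast (N-1).factorial_pos
          have hee : Real.exp (-t) ≤ Real.exp (-x) := Real.exp_le_exp.mpr (by linarith [hx.2])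
          calc Real.exp (-t) * (x ^ (N-1) / ((N-1).factorial : ℝ))
              = (x ^ (N-1) * Real.exp (-t)) / ((N-1).factorial : ℝ) := by ring
            _ ≤ (x ^ (N-1) * Real.exp (-x)) / ((N-1).factorial : ℝ) := by gcongr
            _ = x ^ (N - 1) * Real.exp (-x) / (N - 1).factorial := rfl

lemma hfun_nonneg (N : ℕ) (t : ℝ) : 0 ≤ hfun N t :=
  setIntegral_nonneg measurableSet_Ioc fun x hx => phi_nonneg N x (le_of_lt hx.1)

lemma hfun_le_one (N : ℕ) (hN : 1 ≤ N) (t : ℝ) : hfun N t ≤ 1 := by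
  rcases le_or_gt 0 t with ht | ht
  · rw [hfun_eq N hN t ht]
    have : 0 ≤ ∫ x in Set.Ioi t, x ^ (N - 1) * Real.exp (-x) / (N - 1).factorial :=
      setIntegral_nonneg measurableSet_Ioi fun x hx => phi_nonneg N x (le_of_lt (lt_of_le_of_lt ht hx))
    linarith
  · unfold hfun
    rw [Set.Ioc_eq_empty (by linarith : ¬ (0:ℝ) < t)]
    simp

lemma hfun_measurable (N : ℕ) (hN : 1 ≤ N) : Measurable (hfun N) :=
  (hfun_mono N hN).measurable

lemma key_eq {Ω : Type*} [MeasurableSpace Ω] (μ : Measure Ω) [IsProbabilityMeasure μ]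
    (N : ℕ) (hN : 1 ≤ N) (G I : Ω → ℝ)
    (hGm : Measurable G) (hIm : Measurable I) (hInn : ∀ ω, 0 ≤ I ω)
    (hindep : IndepFun G I μ)
    (hG : ∀ t : ℝ, 0 ≤ t →
      (μ {ω | G ω > t}).toReal
        = ∫ x in Set.Ioi t, x ^ (N - 1) * Real.exp (-x) / (N - 1).factorial)
    (a : ℝ) (ha : 0 ≤ a) :
    1 - (μ {ω | G ω > a * I ω}).toReal = ∫ ω, hfun N (a * I ω) ∂μ := by
  set ν := μ.map G with hν
  set ρ := μ.map I with hρ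
  have hνprob : IsProbabilityMeasure ν := Measure.isProbabilityMeasure_map hGm.aemeasurable
  have hρprob : IsProbabilityMeasure ρ := Measure.isProbabilityMeasure_map hIm.aemeasurable
  have hνIoi : ∀ t : ℝ, ν (Set.Ioi t) = μ {ω | G ω > t} := by
    intro t
    rw [hν, Measure.map_apply hGm measurableSet_Ioi]
    rfl
  have hanti : Measurable fun t : ℝ => ν (Set.Ioi t) := by
    refine Antitone.measurable fun s t hst => ?_
    exact measure_mono (Set.Ioi_subset_Ioi hst)
  have hmap : μ.map (fun ω => (I ω, G ω)) = ρ.prod ν :=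
    (indepFun_iff_map_prod_eq_prod_map_map hIm.aemeasurable hGm.aemeasurable).mp hindep.symm
  have hS : MeasurableSet {p : ℝ × ℝ | a * p.1 < p.2} :=
    measurableSet_lt (measurable_fst.const_mul a) measurable_snd
  have step1 : μ {ω | G ω > a * I ω} = ∫⁻ i, ν (Set.Ioi (a * i)) ∂ρ := by
    have h1 : μ {ω | G ω > a * I ω}
        = μ.map (fun ω => (I ω, G ω)) {p : ℝ × ℝ | a * p.1 < p.2} := by
      rw [Measure.map_apply (hIm.prodMk hGm) hS]
      rfl
    rw [h1, hmap, Measure.prod_apply hS]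
    rfl
  have step2 : (μ {ω | G ω > a * I ω}).toReal
      = ∫ i, (ν (Set.Ioi (a * i))).toReal ∂ρ := by
    rw [step1, ← integral_toReal]
    · exact (hanti.comp (measurable_const.mul measurable_id)).aemeasurable
    · exact Eventually.of_forall fun i => measure_lt_top ν _
  have step3 : ∫ i, (ν (Set.Ioi (a * i))).toReal ∂ρ
      = ∫ ω, (ν (Set.Ioi (a * I ω))).toReal ∂μ := by
    rw [hρ, integral_map hIm.aemeasurable]
    exact ((ENNReal.measurable_toReal.comp (hanti.comp
      (measurable_const.mul measurable_id))).aestronglyMeasurable)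
  have hpt : ∀ ω, (ν (Set.Ioi (a * I ω))).toReal = 1 - hfun N (a * I ω) := by
    intro ω
    have hai : 0 ≤ a * I ω := mul_nonneg ha (hInn ω)
    rw [hνIoi, hG _ hai, hfun_eq N hN _ hai]
    ring
  have hint : Integrable (fun ω => hfun N (a * I ω)) μ := by
    refine ⟨((hfun_measurable N hN).comp (hIm.const_mul a)).aestronglyMeasurable, ?_⟩
    refine HasFiniteIntegral.of_bounded (C := 1) (Eventually.of_forall fun ω => ?_)
    rw [Real.norm_eq_abs, abs_of_nonneg (hfun_nonneg N _)]
    exact hfun_le_one N hN _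
  rw [step2, step3]
  have : ∫ ω, (ν (Set.Ioi (a * I ω))).toReal ∂μ = ∫ ω, (1 - hfun N (a * I ω)) ∂μ :=
    integral_congr_ae (Eventually.of_forall hpt)
  rw [this, integral_sub (integrable_const 1) hint, integral_const]
  simp

lemma hfun_integrable {Ω : Type*} [MeasurableSpace Ω] (μ : Measure Ω) [IsProbabilityMeasure μ]
    (N : ℕ) (hN : 1 ≤ N) (I : Ω → ℝ) (hIm : Measurable I) (a : ℝ) :
    Integrable (fun ω => hfun N (a * I ω)) μ := by
  refine ⟨((hfun_measurable N hN).comp (hIm.const_mul a)).aestronglyMeasurable, ?_⟩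
  refine HasFiniteIntegral.of_bounded (C := 1) (Eventually.of_forall fun ω => ?_)
  rw [Real.norm_eq_abs, abs_of_nonneg (hfun_nonneg N _)]
  exact hfun_le_one N hN _

lemma est {Ω : Type*} [MeasurableSpace Ω] (μ : Measure Ω) [IsProbabilityMeasure μ]
    (N : ℕ) (hN : 1 ≤ N) (I : Ω → ℝ) (hIm : Measurable I) (hInn : ∀ ω, 0 ≤ I ω)
    (hmom : Integrable (fun ω => I ω ^ N) μ) (a : ℝ) (ha : 0 ≤ a) :
    |(∫ ω, hfun N (a * I ω) ∂μ) - a ^ N * (∫ ω, I ω ^ N ∂μ) / N.factorial|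
      ≤ a ^ N * (∫ ω, (1 - Real.exp (-(a * I ω))) * I ω ^ N ∂μ) / N.factorial := by
  have hfp : (0:ℝ) < N.factorial := by exact_mod_cast N.factorial_pos
  have hg1 : Integrable (fun ω => (a * I ω) ^ N / N.factorial) μ := by
    have : (fun ω => (a * I ω) ^ N / N.factorial)
        = fun ω => (a ^ N / N.factorial) * I ω ^ N := by
      funext ω; rw [mul_pow]; ring
    rw [this]; exact hmom.const_mul _
  have hg2 := hfun_integrable μ N hN I hIm a
  have hg3 : Integrable (fun ω => (1 - Real.exp (-(a * I ω))) * ((a ^ N / N.factorial) * I ω ^ N)) μ := by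
    refine (hmom.const_mul (a ^ N / N.factorial)).bdd_mul (c := 1) ?_ (Eventually.of_forall fun ω => ?_)
    · exact (measurable_const.sub ((hIm.const_mul a).neg.exp)).aestronglyMeasurable
    · have h1 : Real.exp (-(a * I ω)) ≤ 1 :=
        Real.exp_le_one_iff.mpr (by simpa using mul_nonneg ha (hInn ω))
      have h2 := (Real.exp_pos (-(a * I ω))).le
      rw [Real.norm_eq_abs, abs_le]
      constructor <;> linarith
  have hint1 : ∫ ω, (a * I ω) ^ N / N.factorial ∂μ
      = a ^ N * (∫ ω, I ω ^ N ∂μ) / N.factorial := by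
    have : (fun ω => (a * I ω) ^ N / N.factorial)
        = fun ω => (a ^ N / N.factorial) * I ω ^ N := by
      funext ω; rw [mul_pow]; ring
    rw [this, integral_const_mul]; ring
  have hlow : 0 ≤ ∫ ω, ((a * I ω) ^ N / N.factorial - hfun N (a * I ω)) ∂μ := by
    refine integral_nonneg fun ω => ?_
    have := hfun_le N hN (a * I ω) (mul_nonneg ha (hInn ω))
    simp only [Pi.zero_apply]; linarith
  have hup : ∫ ω, ((a * I ω) ^ N / N.factorial - hfun N (a * I ω)) ∂μ
      ≤ ∫ ω, (1 - Real.exp (-(a * I ω))) * ((a ^ N / N.factorial) * I ω ^ N) ∂μ := by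
    refine integral_mono (hg1.sub hg2) hg3 fun ω => ?_
    have hge := hfun_ge N hN (a * I ω) (mul_nonneg ha (hInn ω))
    have : (1 - Real.exp (-(a * I ω))) * ((a ^ N / N.factorial) * I ω ^ N)
        = (a * I ω) ^ N / N.factorial - Real.exp (-(a * I ω)) * ((a * I ω) ^ N / N.factorial) := by
      rw [mul_pow]; ring
    rw [this]
    simp only
    linarith
  have hsub : ∫ ω, ((a * I ω) ^ N / N.factorial - hfun N (a * I ω)) ∂μ
      = a ^ N * (∫ ω, I ω ^ N ∂μ) / N.factorial - ∫ ω, hfun N (a * I ω) ∂μ := by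
    rw [integral_sub hg1 hg2, hint1]
  have hrhs : ∫ ω, (1 - Real.exp (-(a * I ω))) * ((a ^ N / N.factorial) * I ω ^ N) ∂μ
      = a ^ N * (∫ ω, (1 - Real.exp (-(a * I ω))) * I ω ^ N ∂μ) / N.factorial := by
    have : (fun ω => (1 - Real.exp (-(a * I ω))) * ((a ^ N / N.factorial) * I ω ^ N))
        = fun ω => (a ^ N / N.factorial) * ((1 - Real.exp (-(a * I ω))) * I ω ^ N) := by
      funext ω; ring
    rw [this, integral_const_mul]; ring
  rw [hsub] at hlow hup
  rw [hrhs] at hup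
  rw [abs_le]
  constructor <;> linarith

lemma f_eq (c τ : ℝ) : (2:ℝ) ^ (c * τ) - 1 = Real.exp (Real.log 2 * (c * τ)) - 1 := by
  rw [Real.rpow_def_of_pos two_pos]

lemma f_nonneg (c : ℝ) (hc : 0 < c) (τ : ℝ) (hτ : 0 < τ) : 0 ≤ (2:ℝ) ^ (c * τ) - 1 := by
  rw [f_eq]
  have : (0:ℝ) ≤ Real.log 2 * (c * τ) := by
    have := Real.log_pos one_lt_two
    positivity
  have := Real.one_le_exp this
  linarith

lemma f_tendsto_zero (c : ℝ) : Tendsto (fun τ : ℝ => (2:ℝ) ^ (c * τ) - 1) (nhdsWithin 0 (Set.Ioi 0)) (nhds 0) := by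
  have hcont : Continuous fun τ : ℝ => Real.exp (Real.log 2 * (c * τ)) - 1 :=
    (Real.continuous_exp.comp (continuous_const.mul (continuous_const.mul continuous_id))).sub
      continuous_const
  have h0 : Real.exp (Real.log 2 * (c * 0)) - 1 = 0 := by simp
  have h2 : Tendsto (fun τ : ℝ => Real.exp (Real.log 2 * (c * τ)) - 1)
      (nhdsWithin 0 (Set.Ioi 0)) (nhds 0) := by
    have := (hcont.tendsto 0).mono_left
      (nhdsWithin_le_nhds (s := Set.Ioi (0:ℝ)))
    rwa [h0] at this
  refine h2.congr fun τ => ?_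
  rw [f_eq]

lemma slope_lim (c : ℝ) : Tendsto (fun τ : ℝ => ((2:ℝ) ^ (c * τ) - 1) / τ) (nhdsWithin 0 (Set.Ioi 0))
    (nhds (c * Real.log 2)) := by
  have hd : HasDerivAt (fun τ : ℝ => Real.exp (Real.log 2 * (c * τ)) - 1) (c * Real.log 2) 0 := by
    have h1 : HasDerivAt (fun τ : ℝ => Real.log 2 * (c * τ)) (Real.log 2 * c) 0 := by
      simpa using (((hasDerivAt_id (0:ℝ)).const_mul c).const_mul (Real.log 2))
    have h2 := h1.exp
    have h3 := h2.sub_const 1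
    simpa [mul_comm] using h3
  have hs := hasDerivAt_iff_tendsto_slope.mp hd
  have hmono : nhdsWithin (0:ℝ) (Set.Ioi 0) ≤ nhdsWithin 0 {(0:ℝ)}ᶜ :=
    nhdsWithin_mono 0 fun x hx => ne_of_gt hx
  have := hs.mono_left hmono
  refine this.congr' ?_
  filter_upwards [self_mem_nhdsWithin] with τ hτ
  simp only [slope_def_field]
  rw [f_eq]
  simp

lemma r_lim {Ω : Type*} [MeasurableSpace Ω] (μ : Measure Ω) [IsProbabilityMeasure μ]
    (N : ℕ) (c : ℝ) (hc : 0 < c) (I : Ω → ℝ) (hIm : Measurable I) (hInn : ∀ ω, 0 ≤ I ω)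
    (hmom : Integrable (fun ω => I ω ^ N) μ) :
    Tendsto (fun τ : ℝ => ∫ ω, (1 - Real.exp (-(((2:ℝ) ^ (c * τ) - 1) * I ω))) * I ω ^ N ∂μ)
      (nhdsWithin 0 (Set.Ioi 0)) (nhds 0) := by
  have main : Tendsto (fun τ : ℝ => ∫ ω, (1 - Real.exp (-(((2:ℝ) ^ (c * τ) - 1) * I ω))) * I ω ^ N ∂μ)
      (nhdsWithin 0 (Set.Ioi 0)) (nhds (∫ ω, (0:ℝ) ∂μ)) := by
    refine tendsto_integral_filter_of_dominated_convergence (fun ω => I ω ^ N) ?_ ?_ hmom ?_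
    · refine Eventually.of_forall fun τ => ?_
      exact ((measurable_const.sub ((hIm.const_mul _).neg.exp)).mul (hIm.pow_const N)).aestronglyMeasurable
    · filter_upwards [self_mem_nhdsWithin] with τ hτ
      refine Eventually.of_forall fun ω => ?_
      have hfa : 0 ≤ ((2:ℝ) ^ (c * τ) - 1) := f_nonneg c hc τ hτ
      have h1 : Real.exp (-(((2:ℝ) ^ (c * τ) - 1) * I ω)) ≤ 1 :=
        Real.exp_le_one_iff.mpr (by simpa using mul_nonneg hfa (hInn ω))
      have h2 := (Real.exp_pos (-(((2:ℝ) ^ (c * τ) - 1) * I ω))).le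
      have h3 : (0:ℝ) ≤ I ω ^ N := pow_nonneg (hInn ω) N
      rw [Real.norm_eq_abs, abs_mul, abs_of_nonneg h3, abs_of_nonneg (by linarith : (0:ℝ) ≤ 1 - Real.exp (-(((2:ℝ) ^ (c * τ) - 1) * I ω)))]
      nlinarith
    · refine Eventually.of_forall fun ω => ?_
      have hcont : ContinuousAt (fun a : ℝ => (1 - Real.exp (-(a * I ω))) * I ω ^ N) 0 := by
        fun_prop
      have := hcont.tendsto.comp (f_tendsto_zero c)
      simpa [Function.comp_def] using this
  simpa using main


/-- Rate-outage asymptotics with N-fold diversity: for G ~ Gamma(N,1) independent of I ≥ 0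
with E[I^N] < ∞ and f(τ) = 2^{cτ} − 1,
1 − Pr(G > f(τ)I) = τ^N (c ln 2)^N E[I^N]/N! + o(τ^N) as τ → 0⁺. -/
theorem stmt12 {Ω : Type*} [MeasurableSpace Ω] (μ : Measure Ω) [IsProbabilityMeasure μ]
    (N : ℕ) (hN : 1 ≤ N) (c : ℝ) (hc : 0 < c) (G I : Ω → ℝ)
    (hGm : Measurable G) (hIm : Measurable I) (hInn : ∀ ω, 0 ≤ I ω)
    (hindep : IndepFun G I μ)
    (hG : ∀ t : ℝ, 0 ≤ t →
      (μ {ω | G ω > t}).toReal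
        = ∫ x in Set.Ioi t, x ^ (N - 1) * Real.exp (-x) / (N - 1).factorial)
    (hmom : Integrable (fun ω => I ω ^ N) μ) :
    (fun τ : ℝ =>
        (1 - (μ {ω | G ω > ((2 : ℝ) ^ (c * τ) - 1) * I ω}).toReal)
          - τ ^ N * (c * Real.log 2) ^ N * (∫ ω, I ω ^ N ∂μ) / N.factorial)
      =o[nhdsWithin 0 (Set.Ioi 0)] fun τ : ℝ => τ ^ N := by
  have hfp : (0:ℝ) < N.factorial := by exact_mod_cast N.factorial_pos
  rw [isLittleO_iff_tendsto' (by
    filter_upwards [self_mem_nhdsWithin] with τ hτ h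
    exact absurd h (pow_ne_zero N (ne_of_gt hτ)))]
  have hpow : Tendsto (fun τ : ℝ => (((2:ℝ) ^ (c * τ) - 1) / τ) ^ N)
      (nhdsWithin 0 (Set.Ioi 0)) (nhds ((c * Real.log 2) ^ N)) := (slope_lim c).pow N
  have hB : Tendsto (fun τ : ℝ => ((((2:ℝ) ^ (c * τ) - 1) / τ) ^ N - (c * Real.log 2) ^ N)
      * ((∫ ω, I ω ^ N ∂μ) / N.factorial)) (nhdsWithin 0 (Set.Ioi 0)) (nhds 0) := by
    have h1 : Tendsto (fun τ : ℝ => (((2:ℝ) ^ (c * τ) - 1) / τ) ^ N - (c * Real.log 2) ^ N)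
        (nhdsWithin 0 (Set.Ioi 0)) (nhds ((c * Real.log 2) ^ N - (c * Real.log 2) ^ N)) :=
      hpow.sub tendsto_const_nhds
    have := h1.mul_const ((∫ ω, I ω ^ N ∂μ) / (N.factorial : ℝ))
    simpa using this
  have hbound : Tendsto (fun τ : ℝ => (((2:ℝ) ^ (c * τ) - 1) / τ) ^ N
      * (∫ ω, (1 - Real.exp (-(((2:ℝ) ^ (c * τ) - 1) * I ω))) * I ω ^ N ∂μ) / N.factorial)
      (nhdsWithin 0 (Set.Ioi 0)) (nhds 0) := by
    have := (hpow.mul (r_lim μ N c hc I hIm hInn hmom)).div_const (N.factorial : ℝ)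
    simpa using this
  have hA : Tendsto (fun τ : ℝ =>
      ((∫ ω, hfun N (((2:ℝ) ^ (c * τ) - 1) * I ω) ∂μ)
        - ((2:ℝ) ^ (c * τ) - 1) ^ N * (∫ ω, I ω ^ N ∂μ) / N.factorial) / τ ^ N)
      (nhdsWithin 0 (Set.Ioi 0)) (nhds 0) := by
    refine squeeze_zero_norm' ?_ hbound
    filter_upwards [self_mem_nhdsWithin] with τ hτ
    have hτ0 : (0:ℝ) < τ := hτ
    have hτN : (0:ℝ) < τ ^ N := pow_pos hτ0 N
    have hest := est μ N hN I hIm hInn hmom _ (f_nonneg c hc τ hτ0)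
    rw [Real.norm_eq_abs, abs_div, abs_of_pos hτN, div_le_iff₀ hτN]
    calc |(∫ ω, hfun N (((2:ℝ) ^ (c * τ) - 1) * I ω) ∂μ)
        - ((2:ℝ) ^ (c * τ) - 1) ^ N * (∫ ω, I ω ^ N ∂μ) / N.factorial|
        ≤ ((2:ℝ) ^ (c * τ) - 1) ^ N
          * (∫ ω, (1 - Real.exp (-(((2:ℝ) ^ (c * τ) - 1) * I ω))) * I ω ^ N ∂μ) / N.factorial := hest
      _ = (((2:ℝ) ^ (c * τ) - 1) / τ) ^ N
          * (∫ ω, (1 - Real.exp (-(((2:ℝ) ^ (c * τ) - 1) * I ω))) * I ω ^ N ∂μ) / N.factorial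
          * τ ^ N := by
          rw [div_pow]
          field_simp
  have hsum := hA.add hB
  rw [add_zero] at hsum
  refine hsum.congr' ?_
  filter_upwards [self_mem_nhdsWithin] with τ hτ
  have hτ0 : (0:ℝ) < τ := hτ
  have hτN : (τ:ℝ) ^ N ≠ 0 := ne_of_gt (pow_pos hτ0 N)
  rw [key_eq μ N hN G I hGm hIm hInn hindep hG _ (f_nonneg c hc τ hτ0)]
  rw [div_pow]
  field_simp
  ring
end

section
/- Define the association probability 𝒜₂ = 2πλ₂ ∫_0^∞ z exp(−π(λ₁(P₁ z^{α₂}/(B P₂))^{2/α₁} + λ₂ z²)) dz. If α₁ = α₂ = α, then 𝒜₂ = λ₂(BP₂/P₁)^{2/α} / (λ₁ + λ₂(BP₂/P₁)^{2/α}). -/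
open MeasureTheory Real

/-- Pico-tier association probability with equal path loss exponents:
𝒜₂ = 2πλ₂ ∫_0^∞ z exp(−π(λ₁(P₁z^α/(BP₂))^{2/α} + λ₂z²)) dz
   = λ₂(BP₂/P₁)^{2/α}/(λ₁ + λ₂(BP₂/P₁)^{2/α}). -/
theorem stmt14 (lam1 lam2 P1 P2 B α : ℝ) (h1 : 0 < lam1) (h2 : 0 < lam2)
    (hP1 : 0 < P1) (hP2 : 0 < P2) (hB : 1 < B) (hα : 2 < α) :
    2 * π * lam2 * ∫ z in Set.Ioi (0 : ℝ),
        z * Real.exp (-(π * (lam1 * (P1 * z ^ α / (B * P2)) ^ (2 / α) + lam2 * z ^ 2)))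
      = lam2 * (B * P2 / P1) ^ (2 / α) / (lam1 + lam2 * (B * P2 / P1) ^ (2 / α)) := by
  have hBP2 : 0 < B * P2 := by positivity
  set a : ℝ := (P1 / (B * P2)) ^ (2 / α) with ha
  set k : ℝ := (B * P2 / P1) ^ (2 / α) with hk
  have hapos : 0 < a := by positivity
  have hkpos : 0 < k := by positivity
  have hak : a * k = 1 := by
    rw [ha, hk, ← Real.mul_rpow (by positivity) (by positivity)]
    rw [div_mul_div_comm, mul_comm P1 (B * P2), div_self (by positivity)]
    simp
  have hαne : α ≠ 0 := by linarith
  set c : ℝ := π * (lam1 * a + lam2) with hc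
  have hcpos : 0 < c := by
    have := Real.pi_pos
    positivity
  have hcongr : ∀ z ∈ Set.Ioi (0 : ℝ),
      z * Real.exp (-(π * (lam1 * (P1 * z ^ α / (B * P2)) ^ (2 / α) + lam2 * z ^ 2)))
      = z ^ (1 : ℝ) * Real.exp (-c * z ^ (2 : ℝ)) := by
    intro z hz
    have hz0 : 0 < z := hz
    have key : (P1 * z ^ α / (B * P2)) ^ (2 / α) = a * z ^ 2 := by
      have : P1 * z ^ α / (B * P2) = (P1 / (B * P2)) * z ^ α := by ring
      rw [this, Real.mul_rpow (by positivity) (by positivity), ← Real.rpow_mul hz0.le,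
        show α * (2 / α) = ((2:ℕ):ℝ) by push_cast; field_simp, Real.rpow_natCast]
    rw [key, Real.rpow_one, ← Real.rpow_natCast z 2]
    push_cast
    congr 1
    rw [hc]
    ring
  rw [setIntegral_congr_fun measurableSet_Ioi hcongr,
    integral_rpow_mul_exp_neg_mul_rpow (by norm_num) (by norm_num) hcpos]
  norm_num
  rw [Real.rpow_neg_one]
  have hkey : 2 * π * lam2 * (c⁻¹ * (1 / 2)) = lam2 * k / (lam1 + lam2 * k) := by
    have ha' : a = k⁻¹ := eq_inv_of_mul_eq_one_left hak
    rw [hc, ha']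
    have hπ : π ≠ 0 := Real.pi_ne_zero
    have hd2 : lam1 + lam2 * k ≠ 0 := by positivity
    rw [show lam1 * k⁻¹ + lam2 = (lam1 + lam2 * k) * k⁻¹ by field_simp]
    field_simp
  linarith [hkey]
end

section
/- With equal path loss exponents α₁ = α₂ = α, the offloading probability 𝒜_{2O} = 2πλ₂ ∫_0^∞ z (exp(−πλ₁(P₁z^α/(BP₂))^{2/α}) − exp(−πλ₁(P₁z^α/P₂)^{2/α})) exp(−πλ₂z²) dz equals λ₂(BP₂/P₁)^{2/α}/(λ₁ + λ₂(BP₂/P₁)^{2/α}) − λ₂(P₂/P₁)^{2/α}/(λ₁ + λ₂(P₂/P₁)^{2/α}). -/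
open MeasureTheory Real Filter

lemma gauss_deriv {c : ℝ} (hc : c ≠ 0) (x : ℝ) :
    HasDerivAt (fun z : ℝ => -Real.exp (-(c * z ^ 2)) / (2 * c))
      (x * Real.exp (-(c * x ^ 2))) x := by
  have h1 : HasDerivAt (fun z : ℝ => -(c * z ^ 2)) (-(c * (2 * x))) x := by
    have := ((hasDerivAt_pow 2 x).const_mul c).neg
    simpa [mul_comm, mul_assoc, mul_left_comm, Pi.neg_def] using this
  have h2 := (h1.exp).neg.div_const (2 * c)
  refine h2.congr_deriv ?_
  rw [div_eq_iff (mul_ne_zero two_ne_zero hc)]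
  ring

lemma gauss_int {c : ℝ} (hc : 0 < c) :
    ∫ z in Set.Ioi (0 : ℝ), z * Real.exp (-(c * z ^ 2)) = 1 / (2 * c) := by
  have hd : ∀ x ∈ Set.Ici (0:ℝ), HasDerivAt (fun z : ℝ => -Real.exp (-(c * z ^ 2)) / (2 * c))
      (x * Real.exp (-(c * x ^ 2))) x := fun x _ => gauss_deriv hc.ne' x
  have hpos : ∀ x ∈ Set.Ioi (0:ℝ), 0 ≤ x * Real.exp (-(c * x ^ 2)) := fun x hx =>
    mul_nonneg (le_of_lt hx) (Real.exp_pos _).le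
  have hlim : Tendsto (fun z : ℝ => -Real.exp (-(c * z ^ 2)) / (2 * c)) atTop (nhds 0) := by
    have : Tendsto (fun z : ℝ => c * z ^ 2) atTop atTop :=
      (tendsto_pow_atTop two_ne_zero).const_mul_atTop hc
    have h := (Real.tendsto_exp_neg_atTop_nhds_zero.comp this)
    have := (h.neg).div_const (2 * c)
    simpa [Function.comp] using this
  have := integral_Ioi_of_hasDerivAt_of_nonneg' hd hpos hlim
  rw [this]; field_simp; simp

lemma gauss_integrable {c : ℝ} (hc : 0 < c) :
    IntegrableOn (fun z => z * Real.exp (-(c * z ^ 2))) (Set.Ioi (0:ℝ)) := by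
  have hd : ∀ x ∈ Set.Ici (0:ℝ), HasDerivAt (fun z : ℝ => -Real.exp (-(c * z ^ 2)) / (2 * c))
      (x * Real.exp (-(c * x ^ 2))) x := fun x _ => gauss_deriv hc.ne' x
  have hpos : ∀ x ∈ Set.Ioi (0:ℝ), 0 ≤ x * Real.exp (-(c * x ^ 2)) := fun x hx =>
    mul_nonneg (le_of_lt hx) (Real.exp_pos _).le
  have hlim : Tendsto (fun z : ℝ => -Real.exp (-(c * z ^ 2)) / (2 * c)) atTop (nhds 0) := by
    have : Tendsto (fun z : ℝ => c * z ^ 2) atTop atTop :=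
      (tendsto_pow_atTop two_ne_zero).const_mul_atTop hc
    have h := (Real.tendsto_exp_neg_atTop_nhds_zero.comp this)
    have := (h.neg).div_const (2 * c)
    simpa [Function.comp] using this
  exact integrableOn_Ioi_deriv_of_nonneg' hd hpos hlim
/-- Offloading probability with equal path loss exponents:
𝒜_{2O} = 2πλ₂ ∫_0^∞ z (e^{−πλ₁(P₁z^α/(BP₂))^{2/α}} − e^{−πλ₁(P₁z^α/P₂)^{2/α}}) e^{−πλ₂z²} dz
 = λ₂(BP₂/P₁)^{2/α}/(λ₁+λ₂(BP₂/P₁)^{2/α}) − λ₂(P₂/P₁)^{2/α}/(λ₁+λ₂(P₂/P₁)^{2/α}). -/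
theorem stmt15 (lam1 lam2 P1 P2 B α : ℝ) (h1 : 0 < lam1) (h2 : 0 < lam2)
    (hP1 : 0 < P1) (hP2 : 0 < P2) (hB : 1 < B) (hα : 2 < α) :
    2 * π * lam2 * ∫ z in Set.Ioi (0 : ℝ),
        z * (Real.exp (-(π * lam1 * (P1 * z ^ α / (B * P2)) ^ (2 / α)))
              - Real.exp (-(π * lam1 * (P1 * z ^ α / P2) ^ (2 / α))))
          * Real.exp (-(π * lam2 * z ^ 2))
      = lam2 * (B * P2 / P1) ^ (2 / α) / (lam1 + lam2 * (B * P2 / P1) ^ (2 / α))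
          - lam2 * (P2 / P1) ^ (2 / α) / (lam1 + lam2 * (P2 / P1) ^ (2 / α)) := by
  have hB0 : 0 < B := lt_trans one_pos hB
  have hα0 : (0:ℝ) < α := by linarith
  set k1 : ℝ := (P1 / (B * P2)) ^ (2 / α) with hk1
  set k2 : ℝ := (P1 / P2) ^ (2 / α) with hk2
  have hk1pos : 0 < k1 := Real.rpow_pos_of_pos (by positivity) _
  have hk2pos : 0 < k2 := Real.rpow_pos_of_pos (by positivity) _
  set c1 : ℝ := π * lam1 * k1 + π * lam2 with hc1
  set c2 : ℝ := π * lam1 * k2 + π * lam2 with hc2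
  have hc1pos : 0 < c1 := by positivity
  have hc2pos : 0 < c2 := by positivity
  have key : ∀ z ∈ Set.Ioi (0:ℝ), ∀ Q : ℝ, 0 < Q →
      (P1 * z ^ α / Q) ^ (2 / α) = (P1 / Q) ^ (2 / α) * z ^ 2 := by
    intro z hz Q hQ
    have hz0 : 0 < z := hz
    have : P1 * z ^ α / Q = (P1 / Q) * z ^ α := by ring
    have hm : α * (2 / α) = 2 := by field_simp
    rw [this, Real.mul_rpow (by positivity) (by positivity),
      ← Real.rpow_mul hz0.le, hm, Real.rpow_two]
  have hcongr : ∫ z in Set.Ioi (0:ℝ),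
        z * (Real.exp (-(π * lam1 * (P1 * z ^ α / (B * P2)) ^ (2 / α)))
              - Real.exp (-(π * lam1 * (P1 * z ^ α / P2) ^ (2 / α))))
          * Real.exp (-(π * lam2 * z ^ 2))
      = ∫ z in Set.Ioi (0:ℝ),
          (z * Real.exp (-(c1 * z ^ 2)) - z * Real.exp (-(c2 * z ^ 2))) := by
    apply setIntegral_congr_fun measurableSet_Ioi
    intro z hz
    dsimp only
    rw [key z hz (B * P2) (by positivity), key z hz P2 hP2, ← hk1, ← hk2]
    have expand : z * (Real.exp (-(π * lam1 * (k1 * z ^ 2))) - Real.exp (-(π * lam1 * (k2 * z ^ 2)))) * Real.exp (-(π * lam2 * z ^ 2))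
        = z * (Real.exp (-(π * lam1 * (k1 * z ^ 2))) * Real.exp (-(π * lam2 * z ^ 2)))
          - z * (Real.exp (-(π * lam1 * (k2 * z ^ 2))) * Real.exp (-(π * lam2 * z ^ 2))) := by ring
    rw [expand, ← Real.exp_add, ← Real.exp_add, hc1, hc2]
    ring_nf
  rw [hcongr, integral_sub (gauss_integrable hc1pos) (gauss_integrable hc2pos),
    gauss_int hc1pos, gauss_int hc2pos]
  have hrw1 : (B * P2 / P1) ^ (2 / α) = k1⁻¹ := by
    rw [hk1, ← Real.inv_rpow (by positivity)]
    congr 1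
    field_simp
  have hrw2 : (P2 / P1) ^ (2 / α) = k2⁻¹ := by
    rw [hk2, ← Real.inv_rpow (by positivity)]
    congr 1
    field_simp
  rw [hrw1, hrw2, hc1, hc2]
  have hπ : (0:ℝ) < π := Real.pi_pos
  field_simp
end

section
/- Let Pr(L = n) = 3.5^{3.5} Γ(n+3.5) x^{n-1} / (Γ(3.5) (n-1)! (x+3.5)^{n+3.5}) for n ≥ 1, with x > 0. Then Σ_{n≥1} Pr(L = n) = 1 and E[L] = 1 + (4.5/3.5) x. -/
open Real Filter MeasureTheory Set

lemma summable_negBinom {a p : ℝ} (ha : 0 < a) (hp0 : 0 < p) (hp1 : p < 1) :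
    Summable (fun m : ℕ => Real.Gamma ((m : ℝ) + a) * p ^ m / (m.factorial : ℝ)) := by
  set f : ℕ → ℝ := fun m => Real.Gamma ((m : ℝ) + a) * p ^ m / (m.factorial : ℝ) with hf
  have hfpos : ∀ n, 0 < f n := by
    intro n
    have h1 : 0 < Real.Gamma ((n : ℝ) + a) := Real.Gamma_pos_of_pos (by positivity)
    have h2 : (0:ℝ) < n.factorial := by exact_mod_cast n.factorial_pos
    positivity
  apply summable_of_ratio_test_tendsto_lt_one hp1
  · filter_upwards with n using (hfpos n).ne'
  · have hratio : ∀ n : ℕ, ‖f (n + 1)‖ / ‖f n‖ = (1 + (a - 1) * (1 / ((n:ℝ) + 1))) * p := by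
      intro n
      rw [Real.norm_of_nonneg (hfpos _).le, Real.norm_of_nonneg (hfpos n).le]
      have hG : Real.Gamma (((n:ℕ)+1 : ℕ) + a) = ((n:ℝ) + a) * Real.Gamma ((n:ℝ) + a) := by
        have : (((n:ℕ)+1 : ℕ) : ℝ) + a = ((n:ℝ) + a) + 1 := by push_cast; ring
        rw [this, Real.Gamma_add_one (by positivity)]
      have hGpos : 0 < Real.Gamma ((n : ℝ) + a) := Real.Gamma_pos_of_pos (by positivity)
      have hfac : (0:ℝ) < n.factorial := by exact_mod_cast n.factorial_pos
      simp only [hf, hG, Nat.factorial_succ]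
      push_cast
      rw [div_div_div_eq]
      have hpn : (0:ℝ) < p ^ n := pow_pos hp0 n
      field_simp
      ring
    have h1 : Tendsto (fun n : ℕ => (1 + (a - 1) * (1 / ((n:ℝ) + 1))) * p) atTop (nhds ((1 + (a-1) * 0) * p)) := by
      exact (((tendsto_const_nhds).add ((tendsto_one_div_add_atTop_nhds_zero_nat).const_mul _)).mul_const p)
    simp only [mul_zero, add_zero, one_mul] at h1
    exact (Tendsto.congr (fun n => (hratio n).symm) h1)

lemma tsum_negBinom {a p : ℝ} (ha : 0 < a) (hp0 : 0 < p) (hp1 : p < 1) :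
    ∑' m : ℕ, Real.Gamma ((m : ℝ) + a) * p ^ m / (m.factorial : ℝ)
      = Real.Gamma a * (1 - p) ^ (-a) := by
  set f : ℕ → ℝ → ℝ := fun m t => t ^ ((m : ℝ) + a - 1) * Real.exp (-t) * (p ^ m / (m.factorial : ℝ)) with hfdef
  have hma : ∀ m : ℕ, (0:ℝ) < (m : ℝ) + a := fun m => by positivity
  -- integrability of each term
  have hint : ∀ m : ℕ, IntegrableOn (f m) (Ioi 0) := by
    intro m
    have h : IntegrableOn (fun t : ℝ => Real.exp (-t) * t ^ ((m:ℝ) + a - 1) * (p ^ m / (m.factorial : ℝ))) (Ioi 0) :=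
      (Real.GammaIntegral_convergent (hma m)).mul_const (p ^ m / (m.factorial : ℝ))
    apply h.congr_fun ?_ measurableSet_Ioi
    intro t ht
    simp only [hfdef]
    ring
  -- value of each integral
  have hval : ∀ m : ℕ, ∫ t in Ioi 0, f m t = Real.Gamma ((m : ℝ) + a) * p ^ m / (m.factorial : ℝ) := by
    intro m
    have h1 : ∫ t in Ioi 0, t ^ ((m:ℝ) + a - 1) * Real.exp (-(1 * t))
        = (1 / 1) ^ ((m:ℝ) + a) * Real.Gamma ((m:ℝ) + a) :=
      Real.integral_rpow_mul_exp_neg_mul_Ioi (hma m) one_pos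
    simp only [one_mul, one_div, inv_one, Real.one_rpow] at h1
    calc ∫ t in Ioi 0, f m t
        = (∫ t in Ioi 0, t ^ ((m:ℝ) + a - 1) * Real.exp (-t)) * (p ^ m / (m.factorial : ℝ)) := by
          rw [← integral_mul_const]
      _ = Real.Gamma ((m : ℝ) + a) * p ^ m / (m.factorial : ℝ) := by rw [h1]; ring
  -- measurability
  have hmeas : ∀ m : ℕ, AEStronglyMeasurable (f m) (volume.restrict (Ioi 0)) := by
    intro m
    have hc : ContinuousOn (f m) (Ioi 0) := by
      apply ContinuousOn.mul ?_ continuousOn_const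
      apply ContinuousOn.mul ?_ (Real.continuous_exp.comp continuous_neg).continuousOn
      intro t ht
      exact (Real.continuousAt_rpow_const t _ (Or.inl (ne_of_gt ht))).continuousWithinAt
    exact hc.aestronglyMeasurable measurableSet_Ioi
  -- nonnegativity on Ioi 0
  have hnn : ∀ m : ℕ, ∀ t ∈ Ioi (0:ℝ), 0 ≤ f m t := by
    intro m t ht
    have h1 : (0:ℝ) ≤ t ^ ((m:ℝ) + a - 1) := Real.rpow_nonneg (le_of_lt ht) _
    have h2 : (0:ℝ) ≤ (m.factorial : ℝ) := Nat.cast_nonneg _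
    simp only [hfdef]
    positivity
  have hS := summable_negBinom ha hp0 hp1
  have hnn' : ∀ m : ℕ, (0:ℝ) ≤ Real.Gamma ((m : ℝ) + a) * p ^ m / (m.factorial : ℝ) := by
    intro m
    have := (Real.Gamma_pos_of_pos (hma m)).le
    have h2 : (0:ℝ) ≤ (m.factorial : ℝ) := Nat.cast_nonneg _
    positivity
  -- norm integrals
  have hnorm : ∀ m : ℕ, ∫ t in Ioi 0, ‖f m t‖ = Real.Gamma ((m : ℝ) + a) * p ^ m / (m.factorial : ℝ) := by
    intro m
    rw [← hval m]
    apply setIntegral_congr_fun measurableSet_Ioi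
    intro t ht
    exact Real.norm_of_nonneg (hnn m t ht)
  -- interchange
  have hkey : ∫ t in Ioi 0, (∑' m : ℕ, f m t) = ∑' m : ℕ, ∫ t in Ioi 0, f m t := by
    apply integral_tsum hmeas
    have : ∀ m : ℕ, ∫⁻ t in Ioi 0, ‖f m t‖ₑ
        = ENNReal.ofReal (Real.Gamma ((m : ℝ) + a) * p ^ m / (m.factorial : ℝ)) := by
      intro m
      rw [← ofReal_integral_norm_eq_lintegral_enorm (hint m), hnorm m]
    rw [funext this] at *
    rw [← ENNReal.ofReal_tsum_of_nonneg hnn' hS]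
    exact ENNReal.ofReal_ne_top
  -- pointwise sum
  have hpt : ∀ t ∈ Ioi (0:ℝ), (∑' m : ℕ, f m t) = t ^ (a - 1) * Real.exp (-((1 - p) * t)) := by
    intro t ht
    have ht0 : (0:ℝ) < t := ht
    have h1 : ∀ m : ℕ, f m t = t ^ (a - 1) * Real.exp (-t) * ((p * t) ^ m / (m.factorial : ℝ)) := by
      intro m
      have : t ^ ((m:ℝ) + a - 1) = t ^ (m:ℕ) * t ^ (a - 1) := by
        rw [← Real.rpow_natCast t m, ← Real.rpow_add ht0]
        ring_nf
      simp only [hfdef, this, mul_pow]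
      ring
    rw [tsum_congr h1, tsum_mul_left]
    have hexp : (∑' m : ℕ, (p * t) ^ m / (m.factorial : ℝ)) = Real.exp (p * t) := by
      rw [Real.exp_eq_exp_ℝ, NormedSpace.exp_eq_tsum_div]
    have harg : -t + p * t = -((1 - p) * t) := by ring
    rw [hexp, mul_assoc, ← Real.exp_add, harg]
  -- total integral
  have htot : ∫ t in Ioi 0, (∑' m : ℕ, f m t) = (1 / (1 - p)) ^ a * Real.Gamma a := by
    rw [setIntegral_congr_fun measurableSet_Ioi hpt]
    have := Real.integral_rpow_mul_exp_neg_mul_Ioi ha (r := 1 - p) (by linarith)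
    exact this
  have hfin : (∑' m : ℕ, Real.Gamma ((m : ℝ) + a) * p ^ m / (m.factorial : ℝ))
      = (1 / (1 - p)) ^ a * Real.Gamma a := by
    rw [← tsum_congr hval, ← hkey, htot]
  have h1p : (0:ℝ) < 1 - p := by linarith
  have hpow : ((1:ℝ)/(1-p)) ^ a = (1-p) ^ (-a) := by
    rw [one_div, Real.inv_rpow h1p.le, ← Real.rpow_neg h1p.le]
  rw [hfin, hpow, mul_comm]

/-- The 3.5-parameter load p.m.f. Pr(L = n) = 3.5^{3.5}Γ(n+3.5)x^{n-1}/(Γ(3.5)(n-1)!(x+3.5)^{n+3.5})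
(n ≥ 1) sums to 1 and has mean E[L] = 1 + (4.5/3.5)x. -/
theorem stmt16 (x : ℝ) (hx : 0 < x) :
    (∑' m : ℕ, (3.5 : ℝ) ^ (3.5 : ℝ) * Real.Gamma ((m : ℝ) + 1 + 3.5) * x ^ m /
        (Real.Gamma 3.5 * (m.factorial : ℝ) * (x + 3.5) ^ ((m : ℝ) + 1 + 3.5)) = 1)
    ∧ (∑' m : ℕ, ((m : ℝ) + 1) *
          ((3.5 : ℝ) ^ (3.5 : ℝ) * Real.Gamma ((m : ℝ) + 1 + 3.5) * x ^ m /
            (Real.Gamma 3.5 * (m.factorial : ℝ) * (x + 3.5) ^ ((m : ℝ) + 1 + 3.5)))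
        = 1 + (4.5 / 3.5) * x) := by
  have hq : (0:ℝ) < x + 3.5 := by linarith
  set p : ℝ := x / (x + 3.5) with hpdef
  have hp0 : 0 < p := div_pos hx hq
  have hp1 : p < 1 := (div_lt_one hq).2 (by linarith)
  have hΓ : Real.Gamma 3.5 ≠ 0 := (Real.Gamma_pos_of_pos (by norm_num)).ne'
  have hxp : (x + 3.5) ^ (4.5:ℝ) ≠ 0 := (Real.rpow_pos_of_pos hq _).ne'
  have h335 : (3.5:ℝ) ^ (3.5:ℝ) ≠ 0 := (Real.rpow_pos_of_pos (by norm_num) _).ne'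
  set C : ℝ := (3.5:ℝ) ^ (3.5:ℝ) / (Real.Gamma 3.5 * (x + 3.5) ^ (4.5:ℝ)) with hCdef
  set v : ℕ → ℝ := fun m => Real.Gamma ((m:ℝ) + 4.5) * p ^ m / (m.factorial : ℝ) with hvdef
  set w : ℕ → ℝ := fun k => Real.Gamma ((k:ℝ) + 5.5) * p ^ k / (k.factorial : ℝ) with hwdef
  have hterm : ∀ m : ℕ, (3.5 : ℝ) ^ (3.5 : ℝ) * Real.Gamma ((m : ℝ) + 1 + 3.5) * x ^ m /
      (Real.Gamma 3.5 * (m.factorial : ℝ) * (x + 3.5) ^ ((m : ℝ) + 1 + 3.5)) = C * v m := by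
    intro m
    have e1 : (m:ℝ) + 1 + 3.5 = (m:ℝ) + 4.5 := by ring_nf
    have e2 : (x + 3.5) ^ ((m:ℝ) + 4.5) = (x + 3.5) ^ m * (x + 3.5) ^ (4.5:ℝ) := by
      rw [Real.rpow_add hq, Real.rpow_natCast]
    have e3 : x ^ m = p ^ m * (x + 3.5) ^ m := by
      rw [← mul_pow, hpdef, div_mul_cancel₀ _ hq.ne']
    have hqm : (x + 3.5) ^ m ≠ 0 := (pow_pos hq m).ne'
    have hfm : ((m.factorial : ℝ)) ≠ 0 := by exact_mod_cast m.factorial_pos.ne'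
    rw [e1, e2, e3, hCdef, hvdef]
    field_simp
  have hSv : Summable v := summable_negBinom (by norm_num) hp0 hp1
  have hSw : Summable w := summable_negBinom (by norm_num) hp0 hp1
  have hv : ∑' m : ℕ, v m = Real.Gamma 4.5 * (1 - p) ^ (-(4.5:ℝ)) :=
    tsum_negBinom (by norm_num) hp0 hp1
  have hw : ∑' k : ℕ, w k = Real.Gamma 5.5 * (1 - p) ^ (-(5.5:ℝ)) :=
    tsum_negBinom (by norm_num) hp0 hp1
  -- numeric facts
  have h1p : 1 - p = 3.5 / (x + 3.5) := by rw [hpdef]; field_simp; ring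
  have hG45 : Real.Gamma 4.5 = 3.5 * Real.Gamma 3.5 := by
    rw [show (4.5:ℝ) = 3.5 + 1 by norm_num, Real.Gamma_add_one (by norm_num)]
  have hG55 : Real.Gamma 5.5 = 4.5 * (3.5 * Real.Gamma 3.5) := by
    rw [show (5.5:ℝ) = 4.5 + 1 by norm_num, Real.Gamma_add_one (by norm_num), hG45]
  have hpow45 : ((3.5:ℝ) / (x + 3.5)) ^ (-(4.5:ℝ)) = (x + 3.5) ^ (4.5:ℝ) / (3.5:ℝ) ^ (4.5:ℝ) := by
    rw [Real.rpow_neg (by positivity), Real.div_rpow (by norm_num) hq.le, inv_div]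
  have hpow55 : ((3.5:ℝ) / (x + 3.5)) ^ (-(5.5:ℝ)) = (x + 3.5) ^ (5.5:ℝ) / (3.5:ℝ) ^ (5.5:ℝ) := by
    rw [Real.rpow_neg (by positivity), Real.div_rpow (by norm_num) hq.le, inv_div]
  have h3545 : (3.5:ℝ) ^ (4.5:ℝ) = (3.5:ℝ) ^ (3.5:ℝ) * 3.5 := by
    rw [show (4.5:ℝ) = 3.5 + 1 by norm_num, Real.rpow_add (by norm_num), Real.rpow_one]
  have h3555 : (3.5:ℝ) ^ (5.5:ℝ) = (3.5:ℝ) ^ (3.5:ℝ) * (3.5 * 3.5) := by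
    rw [show (5.5:ℝ) = 3.5 + 1 + 1 by norm_num, Real.rpow_add (by norm_num),
      Real.rpow_add (by norm_num), Real.rpow_one]
    ring
  have hx55 : (x + 3.5) ^ (5.5:ℝ) = (x + 3.5) ^ (4.5:ℝ) * (x + 3.5) := by
    rw [show (5.5:ℝ) = 4.5 + 1 by norm_num, Real.rpow_add hq, Real.rpow_one]
  -- first part
  have part1 : ∑' m : ℕ, (3.5 : ℝ) ^ (3.5 : ℝ) * Real.Gamma ((m : ℝ) + 1 + 3.5) * x ^ m /
      (Real.Gamma 3.5 * (m.factorial : ℝ) * (x + 3.5) ^ ((m : ℝ) + 1 + 3.5)) = 1 := by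
    rw [tsum_congr hterm, tsum_mul_left, hv, h1p, hpow45, hG45, hCdef, h3545]
    field_simp
  refine ⟨part1, ?_⟩
  -- second part
  have hshift : ∀ k : ℕ, (((k+1:ℕ)):ℝ) * v (k+1) = p * w k := by
    intro k
    have e1 : (((k+1:ℕ)):ℝ) + 4.5 = (k:ℝ) + 5.5 := by push_cast; ring_nf
    have hfk : ((k.factorial : ℝ)) ≠ 0 := by exact_mod_cast k.factorial_pos.ne'
    have hk1 : ((k:ℝ) + 1) ≠ 0 := by positivity
    simp only [hvdef, hwdef, e1, Nat.factorial_succ]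
    push_cast
    rw [pow_succ]
    field_simp
  have hSmv : Summable (fun m : ℕ => (m:ℝ) * v m) := by
    apply (summable_nat_add_iff 1).1
    apply Summable.congr (hSw.mul_left p)
    intro k
    exact (by exact_mod_cast (hshift k).symm)
  have htm : ∑' m : ℕ, (m:ℝ) * v m = p * (Real.Gamma 5.5 * (1 - p) ^ (-(5.5:ℝ))) := by
    rw [Summable.tsum_eq_zero_add hSmv]
    simp only [Nat.cast_zero, zero_mul, zero_add]
    rw [tsum_congr (fun k => by exact_mod_cast hshift k), tsum_mul_left, hw]
  have hsplit : ∀ m : ℕ, ((m : ℝ) + 1) *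
      ((3.5 : ℝ) ^ (3.5 : ℝ) * Real.Gamma ((m : ℝ) + 1 + 3.5) * x ^ m /
        (Real.Gamma 3.5 * (m.factorial : ℝ) * (x + 3.5) ^ ((m : ℝ) + 1 + 3.5)))
      = C * v m + C * ((m:ℝ) * v m) := by
    intro m
    rw [hterm m]; ring
  rw [tsum_congr hsplit, Summable.tsum_add (hSv.mul_left C) (hSmv.mul_left C), tsum_mul_left,
    tsum_mul_left, htm, hv, h1p, hpow45, hpow55, hG45, hG55, hCdef, h3545, h3555, hx55, hpdef]
  field_simp
end
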